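/- arXiv:1510.00473 — 4 statements merged into one kernel-verified Lean document; each statement's English description precedes it below -/
import Mathlib

section
/- Let n be a positive integer and let D be a finite digraph with a haven of order 3n. Then there exists a linked set X ⊆ V(D) with |X| = 2n. -/
/-- A directed path in the digraph with adjacency relation `A`: a nonempty list of
distinct vertices in which each consecutive pair is joined by an edge directed forwards. -/
def IsDipath {V : Type*} (A : V → V → Prop) (l : List V) : Prop :=
  l ≠ [] ∧ l.Nodup ∧ l.Chain' A

/-- A directed path all of whose vertices lie in the set `S`. -/
def DipathIn {V : Type*} (A : V → V → Prop) (S : Set V) (l : List V) : Prop :=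
  IsDipath A l ∧ ∀ v ∈ l, v ∈ S

/-- A directed path from `u` to `v`. -/
def DipathFromTo {V : Type*} (A : V → V → Prop) (l : List V) (u v : V) : Prop :=
  IsDipath A l ∧ l.head? = some u ∧ l.getLast? = some v

/-- The digraph with adjacency `A` is strongly connected on the vertex set `S`:
any vertex of `S` can reach any other by a directed path staying inside `S`. -/
def StrongOn {V : Type*} (A : V → V → Prop) (S : Set V) : Prop :=
  ∀ u ∈ S, ∀ v ∈ S, ∃ l : List V, DipathIn A S l ∧ l.head? = some u ∧ l.getLast? = some v

/-- `C` is (the vertex set of) a strong component of the subdigraph induced on `W`: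
a maximal nonempty strongly connected subset of `W`. -/
def IsStrongComponent {V : Type*} (A : V → V → Prop) (W C : Set V) : Prop :=
  C ⊆ W ∧ C.Nonempty ∧ StrongOn A C ∧
    ∀ C' : Set V, C ⊆ C' → C' ⊆ W → StrongOn A C' → C' = C

/-- `B` is a haven of order `w` in the digraph with adjacency `A` and vertex set `S`:
for every `Z ⊆ S` with `|Z| < w`, `B Z` is a strong component of the digraph minus `Z`,
and `B Z ⊆ B Z'` whenever `Z' ⊆ Z` (the haven axiom). -/
def IsHavenOn {V : Type*} (A : V → V → Prop) (S : Set V) (w : ℕ) (B : Finset V → Set V) : Prop :=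
  ∀ Z : Finset V, ↑Z ⊆ S → Z.card < w →
    IsStrongComponent A (S \ ↑Z) (B Z) ∧ ∀ Z' : Finset V, Z' ⊆ Z → B Z ⊆ B Z'

/-- The digraph with adjacency `A` and vertex set `S` has a haven of order `w`. -/
def HasHavenOn {V : Type*} (A : V → V → Prop) (S : Set V) (w : ℕ) : Prop :=
  ∃ B : Finset V → Set V, IsHavenOn A S w B

/-- The digraph with adjacency `A` (on its whole vertex type) has a haven of order `w`. -/
def HasHaven {V : Type*} (A : V → V → Prop) (w : ℕ) : Prop :=
  HasHavenOn A Set.univ w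

/-- A linkage from the finite set `S` to the finite set `T`: for each `a ∈ S`,
`P a` is a directed path from `a` to `τ a ∈ T`, and the paths are pairwise vertex-disjoint
(so the ends `τ a` are distinct vertices of `T`). -/
def IsLinkage {V : Type*} (A : V → V → Prop) (S T : Finset V)
    (P : V → List V) (τ : V → V) : Prop :=
  (∀ a ∈ S, τ a ∈ T ∧ DipathFromTo A (P a) a (τ a)) ∧
  ∀ a₁ ∈ S, ∀ a₂ ∈ S, a₁ ≠ a₂ → ∀ v ∈ P a₁, v ∉ P a₂

/-- `X` is linked: for every `S, T ⊆ X` with `|S| = |T|` there is a linkage of `|S|`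
pairwise vertex-disjoint directed paths from `S` to `T`. -/
def Linked {V : Type*} (A : V → V → Prop) (X : Finset V) : Prop :=
  ∀ S T : Finset V, S ⊆ X → T ⊆ X → S.card = T.card →
    ∃ (P : V → List V) (τ : V → V), IsLinkage A S T P τ

/-- `(S, A')` is a subdigraph of the digraph with adjacency `A`: every edge of `A'`
is an edge of `A` with both ends in `S`. -/
def IsSubdigraph {V : Type*} (A : V → V → Prop) (S : Set V) (A' : V → V → Prop) : Prop :=
  ∀ u v, A' u v → A u v ∧ u ∈ S ∧ v ∈ S

/-- The digraph with adjacency `A` and vertex set `S` is `k`-eulerianizable: it is strongly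
connected and one can assign a positive multiplicity to each edge so that at every vertex the
total multiplicity of in-edges equals that of the out-edges and both are at most `k`. -/
def Eulerianizable {V : Type*} [Fintype V] (A : V → V → Prop) (S : Set V) (k : ℕ) : Prop :=
  StrongOn A S ∧ ∃ m : V → V → ℕ,
    (∀ u v, A u v → 1 ≤ m u v) ∧ (∀ u v, ¬ A u v → m u v = 0) ∧
    ∀ v ∈ S, (∑ u, m u v) = (∑ u, m v u) ∧ (∑ u, m v u) ≤ k


def WalkFT {V : Type*} (A : V → V → Prop) (l : List V) (u v : V) : Prop :=
  l ≠ [] ∧ l.Chain' A ∧ l.head? = some u ∧ l.getLast? = some v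

namespace WalkFT

variable {V : Type*} {A : V → V → Prop} {l m : List V} {u v x : V}

theorem singleton (v : V) : WalkFT A [v] v v :=
  ⟨by simp, List.isChain_singleton _, rfl, rfl⟩

theorem mem_head (h : WalkFT A l u v) : u ∈ l :=
  List.mem_of_mem_head? (by rw [h.2.2.1]; simp)

theorem mem_last (h : WalkFT A l u v) : v ∈ l :=
  List.mem_of_mem_getLast? (by rw [h.2.2.2]; simp)

theorem append (h : WalkFT A l u x) (h' : WalkFT A m x v) :
    WalkFT A (l ++ m.tail) u v ∧ ∀ y ∈ l ++ m.tail, y ∈ l ∨ y ∈ m := by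
  obtain ⟨h1, h2, h3, h4⟩ := h
  obtain ⟨g1, g2, g3, g4⟩ := h'
  obtain ⟨m', rfl⟩ : ∃ m', m = x :: m' := by
    cases m with
    | nil => exact absurd rfl g1
    | cons a t => exact ⟨t, by simp at g3; rw [g3]⟩
  constructor
  · refine ⟨by simp [h1], ?_, ?_, ?_⟩
    · simp only [List.Chain']; rw [List.isChain_append]
      refine ⟨h2, g2.tail, ?_⟩
      intro a ha b hb
      rw [h4] at ha; cases ha
      cases m' with
      | nil => simp at hb
      | cons c t =>
        simp at hb; cases hb
        exact List.isChain_cons_cons.mp g2 |>.1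
    · rw [List.head?_append_of_ne_nil _ h1]; exact h3
    · cases m' with
      | nil =>
        simp only [List.tail_cons, List.append_nil]
        simp only [List.getLast?_singleton, Option.some.injEq] at g4
        rw [h4, g4]
      | cons c t =>
        simp only [List.tail_cons]
        rw [List.getLast?_append_of_ne_nil _ (by simp)]
        rw [List.getLast?_cons_cons] at g4
        exact g4
  · intro y hy
    rcases List.mem_append.mp hy with hy | hy
    · exact Or.inl hy
    · exact Or.inr (List.mem_of_mem_tail hy)

end WalkFT

namespace WalkFT

variable {V : Type*} {A : V → V → Prop} {l m : List V} {u v a : V}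

theorem of_dipath (h : DipathFromTo A l u v) : WalkFT A l u v :=
  ⟨h.1.1, h.1.2.2, h.2.1, h.2.2⟩

private theorem dup_split {α : Type*} {l : List α} {a : α} (h : List.Duplicate a l) :
    ∃ s t u, l = s ++ a :: (t ++ a :: u) := by
  induction h with
  | @cons_mem l hm =>
    obtain ⟨t, u, rfl⟩ := List.append_of_mem hm
    exact ⟨[], t, u, rfl⟩
  | @cons_duplicate b l _ ih =>
    obtain ⟨s, t, u, rfl⟩ := ih
    exact ⟨b :: s, t, u, rfl⟩

theorem toPath_aux : ∀ (N : ℕ) (l : List V) (u v : V), l.length ≤ N → WalkFT A l u v →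
    ∃ l', DipathFromTo A l' u v ∧ ∀ y ∈ l', y ∈ l := by
  intro N
  induction N with
  | zero =>
    intro l u v hlen h
    cases l with
    | nil => exact absurd rfl h.1
    | cons a t => simp at hlen
  | succ N ih =>
    intro l u v hlen h
    by_cases hnd : l.Nodup
    · exact ⟨l, ⟨⟨h.1, hnd, h.2.1⟩, h.2.2.1, h.2.2.2⟩, fun y hy => hy⟩
    · obtain ⟨a, ha⟩ := List.exists_duplicate_iff_not_nodup.mpr hnd
      obtain ⟨s, t, w, rfl⟩ := dup_split ha
      obtain ⟨h1, h2, h3, h4⟩ := h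
      have hch : (s ++ [a]).Chain' A ∧ (a :: w).Chain' A := by
        have heq : s ++ a :: (t ++ a :: w) = (s ++ [a]) ++ (t ++ (a :: w)) := by simp
        rw [heq] at h2
        exact ⟨h2.left_of_append, h2.right_of_append.right_of_append⟩
      have h2' : ((s ++ [a]) ++ w).Chain' A := by
        simp only [List.Chain']; rw [List.isChain_append]
        refine ⟨hch.1, hch.2.tail, ?_⟩
        intro x hx y hy
        rw [List.getLast?_append_cons, List.getLast?_singleton] at hx
        cases hx
        exact (List.isChain_cons.mp hch.2).1 y hy
      have hlast : (s ++ a :: w).getLast? = some v := by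
        rw [List.getLast?_append_cons]
        rw [List.getLast?_append_cons] at h4
        have heq : a :: (t ++ a :: w) = (a :: t) ++ a :: w := by simp
        rw [heq, List.getLast?_append_cons] at h4
        exact h4
      have hhead : (s ++ a :: w).head? = some u := by
        cases s with
        | nil =>
          simp only [List.nil_append] at h3 ⊢
          simpa using h3
        | cons b s' => simpa using h3
      have hlen' : (s ++ a :: w).length ≤ N := by
        have := hlen
        simp only [List.length_append, List.length_cons] at this ⊢
        omega
      obtain ⟨l', hp, hsub⟩ := ih (s ++ a :: w) u v hlen'
        ⟨by simp, by simpa using h2', hhead, hlast⟩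
      refine ⟨l', hp, fun y hy => ?_⟩
      have := hsub y hy
      simp at this ⊢
      tauto
    
theorem toPath (h : WalkFT A l u v) : ∃ l', DipathFromTo A l' u v ∧ ∀ y ∈ l', y ∈ l :=
  toPath_aux l.length l u v le_rfl h

theorem suffix_from (h : WalkFT A l u v) (ha : a ∈ l) :
    ∃ l', WalkFT A l' a v ∧ ∀ y ∈ l', y ∈ l := by
  obtain ⟨s, t, rfl⟩ := List.append_of_mem ha
  refine ⟨a :: t, ⟨by simp, h.2.1.right_of_append, rfl, ?_⟩, ?_⟩
  · rw [← List.getLast?_append_cons]; exact h.2.2.2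
  · intro y hy; simp at hy ⊢; tauto

theorem prefix_to (h : WalkFT A l u v) (ha : a ∈ l) :
    ∃ l', WalkFT A l' u a ∧ ∀ y ∈ l', y ∈ l := by
  obtain ⟨s, t, rfl⟩ := List.append_of_mem ha
  refine ⟨s ++ [a], ⟨by simp, ?_, ?_, ?_⟩, ?_⟩
  · have : s ++ a :: t = (s ++ [a]) ++ t := by simp
    rw [this] at h
    exact h.2.1.left_of_append
  · cases s with
    | nil =>
      have := h.2.2.1
      simpa using this
    | cons b s' => simpa using h.2.2.1
  · rw [List.getLast?_append_cons, List.getLast?_singleton]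
  · intro y hy; simp at hy ⊢; tauto

end WalkFT

/-- split at the first element satisfying P -/
theorem List.first_split {α : Type*} {P : α → Prop} :
    ∀ {l : List α}, (∃ a ∈ l, P a) → ∃ s a t, l = s ++ a :: t ∧ P a ∧ ∀ y ∈ s, ¬ P y := by
  intro l
  induction l with
  | nil => rintro ⟨a, ha, -⟩; simp at ha
  | cons b l ih =>
    intro h
    by_cases hb : P b
    · exact ⟨[], b, l, rfl, hb, by simp⟩
    · obtain ⟨a, ha, hPa⟩ := h
      have ha' : a ∈ l := by
        rcases List.mem_cons.mp ha with rfl | h'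
        · exact absurd hPa hb
        · exact h'
      obtain ⟨s, a', t, rfl, h1, h2⟩ := ih ⟨a, ha', hPa⟩
      refine ⟨b :: s, a', t, rfl, h1, ?_⟩
      intro y hy
      rcases List.mem_cons.mp hy with rfl | hy'
      · exact hb
      · exact h2 y hy'

/-- split at the last element satisfying P -/
theorem List.last_split {α : Type*} {P : α → Prop} :
    ∀ {l : List α}, (∃ a ∈ l, P a) → ∃ s a t, l = s ++ a :: t ∧ P a ∧ ∀ y ∈ t, ¬ P y := by
  intro l
  induction l with
  | nil => rintro ⟨a, ha, -⟩; simp at ha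
  | cons b l ih =>
    intro h
    by_cases hl : ∃ a ∈ l, P a
    · obtain ⟨s, a', t, rfl, h1, h2⟩ := ih hl
      exact ⟨b :: s, a', t, rfl, h1, h2⟩
    · push_neg at hl
      obtain ⟨a, ha, hPa⟩ := h
      rcases List.mem_cons.mp ha with rfl | ha'
      · exact ⟨[], a, l, rfl, hPa, hl⟩
      · exact absurd hPa (hl a ha')


theorem WalkFT.prefix_split {V : Type*} {A : V → V → Prop} {s t : List V} {u v a : V}
    (h : WalkFT A (s ++ a :: t) u v) : WalkFT A (s ++ [a]) u a := by
  refine ⟨by simp, ?_, ?_, ?_⟩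
  · have heq : s ++ a :: t = (s ++ [a]) ++ t := by simp
    rw [heq] at h
    exact h.2.1.left_of_append
  · cases s with
    | nil => simpa using h.2.2.1
    | cons b s' => simpa using h.2.2.1
  · rw [List.getLast?_append_cons, List.getLast?_singleton]

theorem WalkFT.suffix_split {V : Type*} {A : V → V → Prop} {s t : List V} {u v a : V}
    (h : WalkFT A (s ++ a :: t) u v) : WalkFT A (a :: t) a v := by
  refine ⟨by simp, h.2.1.right_of_append, rfl, ?_⟩
  rw [← List.getLast?_append_cons]
  exact h.2.2.2

theorem dipath_mono {V : Type*} {A A' : V → V → Prop} {l : List V} {u v : V}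
    (hAA : ∀ a b, A' a b → A a b) (h : DipathFromTo A' l u v) : DipathFromTo A l u v :=
  ⟨⟨h.1.1, h.1.2.1, h.1.2.2.imp hAA⟩, h.2.1, h.2.2⟩

theorem dipath_glue {V : Type*} {A : V → V → Prop} {p q : List V} {u w v : V}
    (h : DipathFromTo A p u w) (h' : DipathFromTo A q w v)
    (hdisj : ∀ z, z ∈ p → z ∈ q → z = w) :
    DipathFromTo A (p ++ q.tail) u v ∧ ∀ y ∈ p ++ q.tail, y ∈ p ∨ y ∈ q := by
  obtain ⟨hw, hmem⟩ := (WalkFT.of_dipath h).append (WalkFT.of_dipath h')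
  refine ⟨⟨⟨hw.1, ?_, hw.2.1⟩, hw.2.2.1, hw.2.2.2⟩, hmem⟩
  rw [List.nodup_append]
  refine ⟨h.1.2.1, h'.1.2.1.sublist (List.tail_sublist q), ?_⟩
  intro z hz z' hz' hzz'
  rw [← hzz'] at hz'
  have hzq : z ∈ q := List.mem_of_mem_tail hz'
  have : z = w := hdisj z hz hzq
  subst this
  -- z = w = head of q, not in tail since q nodup
  have hq : q.head? = some z := h'.2.1
  obtain ⟨q', rfl⟩ : ∃ q', q = z :: q' := by
    cases q with
    | nil => simp at hq
    | cons b t => simp at hq; rw [hq]; exact ⟨t, rfl⟩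
  simp only [List.tail_cons] at hz'
  exact (List.nodup_cons.mp h'.1.2.1).1 hz'

theorem dipath_glue_edge {V : Type*} {A : V → V → Prop} {p q : List V} {u x y v : V}
    (h : DipathFromTo A p u x) (h' : DipathFromTo A q y v) (hxy : A x y)
    (hdisj : ∀ z, z ∈ p → z ∈ q → False) :
    DipathFromTo A (p ++ q) u v ∧ ∀ z ∈ p ++ q, z ∈ p ∨ z ∈ q := by
  refine ⟨⟨⟨by simp [h.1.1], ?_, ?_⟩, ?_, ?_⟩, fun z hz => List.mem_append.mp hz⟩
  · rw [List.nodup_append]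
    exact ⟨h.1.2.1, h'.1.2.1, fun z hz z' hz' hzz' => hdisj z hz (hzz' ▸ hz')⟩
  · simp only [List.Chain']; rw [List.isChain_append]
    refine ⟨h.1.2.2, h'.1.2.2, ?_⟩
    intro a ha b hb
    rw [h.2.2] at ha; cases ha
    rw [h'.2.1] at hb; cases hb
    exact hxy
  · rw [List.head?_append_of_ne_nil _ h.1.1]; exact h.2.1
  · rw [List.getLast?_append_of_ne_nil _ h'.1.1]; exact h'.2.2

theorem List.exists_forall₂ {α β : Type*} {L : List α} {R : α → β → Prop}
    (h : ∀ a ∈ L, ∃ b, R a b) : ∃ L' : List β, List.Forall₂ R L L' := by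
  induction L with
  | nil => exact ⟨[], List.Forall₂.nil⟩
  | cons a L ih =>
    obtain ⟨b, hb⟩ := h a (by simp)
    obtain ⟨L', hL'⟩ := ih (fun a' ha' => h a' (by simp [ha']))
    exact ⟨b :: L', List.Forall₂.cons hb hL'⟩

theorem List.Forall₂.mem_right {α β : Type*} {L : List α} {L' : List β} {R : α → β → Prop}
    (h : List.Forall₂ R L L') {b : β} (hb : b ∈ L') : ∃ a ∈ L, R a b := by
  induction h with
  | nil => simp at hb
  | cons hr _ ih =>
    rcases List.mem_cons.mp hb with rfl | hb'
    · exact ⟨_, by simp, hr⟩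
    · obtain ⟨a, ha, har⟩ := ih hb'
      exact ⟨a, by simp [ha], har⟩

theorem List.Forall₂.pairwise_right {α β : Type*} {L : List α} {L' : List β}
    {R : α → β → Prop} {P : α → α → Prop} {P' : β → β → Prop}
    (h : List.Forall₂ R L L') (hp : List.Pairwise P L)
    (himp : ∀ a b a' b', R a a' → R b b' → P a b → P' a' b') : List.Pairwise P' L' := by
  induction h with
  | nil => exact List.Pairwise.nil
  | @cons a a' L L' hr hf ih =>
    rw [List.pairwise_cons] at hp ⊢
    refine ⟨?_, ih hp.2⟩
    intro b' hb'
    obtain ⟨b, hb, hbr⟩ := hf.mem_right hb'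
    exact himp a b a' b' hr hbr (hp.1 b hb)

/-- `Z` meets every dipath from `S` to `T`. -/
def VSep {V : Type*} (A : V → V → Prop) (S T Z : Finset V) : Prop :=
  ∀ l u v, DipathFromTo A l u v → u ∈ S → v ∈ T → ∃ z ∈ Z, z ∈ l

noncomputable def edgeCount {V : Type} [Fintype V] (adj : V → V → Prop) : ℕ :=
  {p : V × V | adj p.1 p.2 ∧ p.1 ≠ p.2}.ncard

section Menger

variable {V : Type} [Fintype V] [DecidableEq V]

theorem menger_base (adj : V → V → Prop) (hnl : ∀ u v, adj u v → u = v)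
    (S T : Finset V) (k : ℕ) (h : ∀ Z, VSep adj S T Z → k ≤ Z.card) :
    ∃ L : List (List V), L.length = k ∧ L.Pairwise (fun p q => ∀ z ∈ p, z ∉ q) ∧
      ∀ p ∈ L, ∃ u v, DipathFromTo adj p u v ∧ u ∈ S ∧ v ∈ T := by
  have hshape : ∀ l u v, DipathFromTo adj l u v → l = [u] ∧ u = v := by
    rintro l u v ⟨⟨h1, h2, h3⟩, h4, h5⟩
    match l with
    | [a] =>
      simp at h4 h5
      constructor
      · rw [h4]
      · rw [← h4, ← h5]
    | a :: b :: t =>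
      exfalso
      have hab : adj a b := (List.isChain_cons_cons.mp h3).1
      have : a = b := hnl a b hab
      subst this
      simp at h2
  have hsep : VSep adj S T (S ∩ T) := by
    intro l u v hl hu hv
    obtain ⟨rfl, rfl⟩ := hshape l u v hl
    exact ⟨u, Finset.mem_inter.mpr ⟨hu, hv⟩, by simp⟩
  obtain ⟨Y, hY, hYcard⟩ := Finset.exists_subset_card_eq (h _ hsep)
  refine ⟨Y.toList.map (fun a => [a]), by simp [Finset.length_toList, hYcard], ?_, ?_⟩
  · have hnd : Y.toList.Nodup := Finset.nodup_toList Y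
    exact List.Pairwise.map _ (fun {a b} (hab : a ≠ b) => by simp [hab]) hnd
  · intro p hp
    simp only [List.mem_map] at hp
    obtain ⟨a, ha, rfl⟩ := hp
    have haY : a ∈ S ∩ T := hY (Finset.mem_toList.mp ha)
    exact ⟨a, a, ⟨⟨by simp, by simp, List.isChain_singleton _⟩, rfl, rfl⟩,
      (Finset.mem_inter.mp haY).1, (Finset.mem_inter.mp haY).2⟩

private theorem chain'_cases {adj : V → V → Prop} {x y : V} :
    ∀ {l : List V}, l.Chain' adj →
      l.Chain' (fun a b => adj a b ∧ ¬(a = x ∧ b = y)) ∨ (x ∈ l ∧ y ∈ l) := by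
  intro l
  induction l with
  | nil => intro; left; exact List.isChain_nil
  | cons a l ih =>
    intro h
    rcases ih h.tail with hc | ⟨hx, hy⟩
    · cases l with
      | nil => left; exact List.isChain_singleton _
      | cons b t =>
        by_cases hab : a = x ∧ b = y
        · right
          refine ⟨?_, ?_⟩
          · simp [hab.1]
          · simp [hab.2]
        · left
          exact List.isChain_cons_cons.mpr ⟨⟨(List.isChain_cons_cons.mp h).1, hab⟩, hc⟩
    · right
      exact ⟨by simp [hx], by simp [hy]⟩

private theorem chain'_res_prefix {adj : V → V → Prop} {x y : V} :
    ∀ (s : List V) (w : V), (s ++ [w]).Chain' adj → (∀ z ∈ s, z ≠ x) →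
      (s ++ [w]).Chain' (fun a b => adj a b ∧ ¬(a = x ∧ b = y)) := by
  intro s
  induction s with
  | nil => intro w _ _; exact List.isChain_singleton _
  | cons a s ih =>
    intro w h hs
    simp only [List.Chain'] at h ⊢; rw [List.cons_append, List.isChain_cons] at h ⊢
    refine ⟨?_, ih w h.2 (fun z hz => hs z (by simp [hz]))⟩
    intro b hb
    refine ⟨h.1 b hb, ?_⟩
    rintro ⟨rfl, rfl⟩
    exact hs a (by simp) rfl

private theorem chain'_res_suffix {adj : V → V → Prop} {x y : V} :
    ∀ (t : List V) (w : V), (w :: t).Chain' adj → (∀ z ∈ t, z ≠ y) →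
      (w :: t).Chain' (fun a b => adj a b ∧ ¬(a = x ∧ b = y)) := by
  intro t
  induction t with
  | nil => intro w _ _; exact List.isChain_singleton _
  | cons b t ih =>
    intro w h hs
    simp only [List.Chain'] at h ⊢; rw [List.isChain_cons_cons] at h ⊢
    refine ⟨⟨h.1, ?_⟩, ih b h.2 (fun z hz => hs z (by simp [hz]))⟩
    rintro ⟨rfl, rfl⟩
    exact hs b (by simp) rfl

end Menger

section Menger2

variable {V : Type} [Fintype V] [DecidableEq V]

theorem menger_aux : ∀ (m : ℕ) (adj : V → V → Prop) (S T : Finset V) (k : ℕ),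
    edgeCount adj ≤ m → (∀ Z, VSep adj S T Z → k ≤ Z.card) →
    ∃ L : List (List V), L.length = k ∧ L.Pairwise (fun p q => ∀ z ∈ p, z ∉ q) ∧
      ∀ p ∈ L, ∃ u v, DipathFromTo adj p u v ∧ u ∈ S ∧ v ∈ T := by
  intro m
  induction m with
  | zero =>
    intro adj S T k hec h
    refine menger_base adj ?_ S T k h
    intro u v huv
    by_contra hne
    have hmem : (u, v) ∈ {p : V × V | adj p.1 p.2 ∧ p.1 ≠ p.2} := ⟨huv, hne⟩
    have : 0 < edgeCount adj := by
      rw [edgeCount, Set.ncard_pos (Set.toFinite _)]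
      exact ⟨(u, v), hmem⟩
    omega
  | succ m ih =>
    intro adj S T k hec h
    by_cases hE : ∃ x y, adj x y ∧ x ≠ y
    swap
    · push_neg at hE
      exact menger_base adj (fun u v huv => by_contra fun hne => hne (hE u v huv)) S T k h
    obtain ⟨x, y, hxy, hxyne⟩ := hE
    set adj' : V → V → Prop := fun a b => adj a b ∧ ¬(a = x ∧ b = y) with hadj'def
    have hmono : ∀ a b, adj' a b → adj a b := fun a b hab => hab.1
    have hec' : edgeCount adj' ≤ m := by
      have hlt : edgeCount adj' < edgeCount adj := by
        apply Set.ncard_lt_ncard _ (Set.toFinite _)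
        constructor
        · rintro ⟨a, b⟩ ⟨⟨h1, h2⟩, h3⟩
          exact ⟨h1, h3⟩
        · intro hsub
          have : ((x, y) : V × V) ∈ {p : V × V | adj' p.1 p.2 ∧ p.1 ≠ p.2} :=
            hsub ⟨hxy, hxyne⟩
          exact this.1.2 ⟨rfl, rfl⟩
      omega
    by_cases hZ : ∀ Z, VSep adj' S T Z → k ≤ Z.card
    · obtain ⟨L, h1, h2, h3⟩ := ih adj' S T k hec' hZ
      refine ⟨L, h1, h2, fun p hp => ?_⟩
      obtain ⟨u, v, hd, hu, hv⟩ := h3 p hp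
      exact ⟨u, v, dipath_mono hmono hd, hu, hv⟩
    push_neg at hZ
    obtain ⟨Z₀, hZ₀sep, hZ₀card⟩ := hZ
    -- Y and Y' are adj-separators
    have hsepY : VSep adj S T (insert x Z₀) := by
      intro l u v hl hu hv
      rcases chain'_cases (x := x) (y := y) hl.1.2.2 with hc | ⟨hx, _⟩
      · obtain ⟨z, hz, hzl⟩ := hZ₀sep l u v ⟨⟨hl.1.1, hl.1.2.1, hc⟩, hl.2.1, hl.2.2⟩ hu hv
        exact ⟨z, by simp [hz], hzl⟩
      · exact ⟨x, by simp, hx⟩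
    have hsepY' : VSep adj S T (insert y Z₀) := by
      intro l u v hl hu hv
      rcases chain'_cases (x := x) (y := y) hl.1.2.2 with hc | ⟨_, hy⟩
      · obtain ⟨z, hz, hzl⟩ := hZ₀sep l u v ⟨⟨hl.1.1, hl.1.2.1, hc⟩, hl.2.1, hl.2.2⟩ hu hv
        exact ⟨z, by simp [hz], hzl⟩
      · exact ⟨y, by simp, hy⟩
    have hxZ₀ : x ∉ Z₀ := by
      intro hx
      have := h _ hsepY
      rw [Finset.insert_eq_self.mpr hx] at this
      omega
    have hyZ₀ : y ∉ Z₀ := by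
      intro hy
      have := h _ hsepY'
      rw [Finset.insert_eq_self.mpr hy] at this
      omega
    have hYcard : (insert x Z₀).card = k := by
      have h1 := h _ hsepY
      rw [Finset.card_insert_of_notMem hxZ₀] at h1 ⊢
      omega
    have hY'card : (insert y Z₀).card = k := by
      have h1 := h _ hsepY'
      rw [Finset.card_insert_of_notMem hyZ₀] at h1 ⊢
      omega
    set Y : Finset V := insert x Z₀ with hYdef
    set Y' : Finset V := insert y Z₀ with hY'def
    -- separators from S to Y are big
    have hsep2 : ∀ Sn, VSep adj' S Y Sn → k ≤ Sn.card := by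
      intro Sn hSn
      apply h
      intro l u v hl hu hv
      have hmemY : ∃ a ∈ l, a ∈ (Y : Finset V) := by
        rcases chain'_cases (x := x) (y := y) hl.1.2.2 with hc | ⟨hx, _⟩
        · obtain ⟨z, hz, hzl⟩ := hZ₀sep l u v ⟨⟨hl.1.1, hl.1.2.1, hc⟩, hl.2.1, hl.2.2⟩ hu hv
          exact ⟨z, hzl, by simp [hYdef, hz]⟩
        · exact ⟨x, hx, by simp [hYdef]⟩
      obtain ⟨s, w, t, rfl, hwY, hsY⟩ := List.first_split hmemY
      have hwalk : WalkFT adj (s ++ [w]) u w := (WalkFT.of_dipath hl).prefix_split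
      have hchain' : (s ++ [w]).Chain' adj' := by
        apply chain'_res_prefix s w hwalk.2.1
        intro z hz hzx
        exact hsY z hz (by rw [hzx]; simp [hYdef])
      have hnodup : (s ++ [w]).Nodup := by
        refine hl.1.2.1.sublist ?_
        have : s ++ w :: t = (s ++ [w]) ++ t := by simp
        rw [this]
        exact List.sublist_append_left _ _
      obtain ⟨z, hzSn, hzl⟩ := hSn (s ++ [w]) u w
        ⟨⟨hwalk.1, hnodup, hchain'⟩, hwalk.2.2.1, hwalk.2.2.2⟩ hu hwY
      refine ⟨z, hzSn, ?_⟩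
      have := hzl
      simp at this ⊢
      tauto
    have hsep2' : ∀ Sn, VSep adj' Y' T Sn → k ≤ Sn.card := by
      intro Sn hSn
      apply h
      intro l u v hl hu hv
      have hmemY : ∃ a ∈ l, a ∈ (Y' : Finset V) := by
        rcases chain'_cases (x := x) (y := y) hl.1.2.2 with hc | ⟨_, hy⟩
        · obtain ⟨z, hz, hzl⟩ := hZ₀sep l u v ⟨⟨hl.1.1, hl.1.2.1, hc⟩, hl.2.1, hl.2.2⟩ hu hv
          exact ⟨z, hzl, by simp [hY'def, hz]⟩
        · exact ⟨y, hy, by simp [hY'def]⟩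
      obtain ⟨s, w, t, rfl, hwY, htY⟩ := List.last_split hmemY
      have hwalk : WalkFT adj (w :: t) w v := (WalkFT.of_dipath hl).suffix_split
      have hchain' : (w :: t).Chain' adj' := by
        apply chain'_res_suffix t w hwalk.2.1
        intro z hz hzy
        exact htY z hz (by rw [hzy]; simp [hY'def])
      have hnodup : (w :: t).Nodup := hl.1.2.1.sublist (List.sublist_append_right _ _)
      obtain ⟨z, hzSn, hzl⟩ := hSn (w :: t) w v
        ⟨⟨hwalk.1, hnodup, hchain'⟩, hwalk.2.2.1, hwalk.2.2.2⟩ hwY hv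
      refine ⟨z, hzSn, ?_⟩
      have := hzl
      simp at this ⊢
      tauto
    obtain ⟨L₁, hL₁len, hL₁pw, hL₁p⟩ := ih adj' S Y k hec' hsep2
    obtain ⟨L₂, hL₂len, hL₂pw, hL₂p⟩ := ih adj' Y' T k hec' hsep2'
    -- truncate L₁ at first Y-vertex
    have htr₁ : ∀ p ∈ L₁, ∃ p' : List V,
        ((∃ u w, DipathFromTo adj' p' u w ∧ u ∈ S ∧ w ∈ (Y : Finset V) ∧
          (∀ z ∈ p', z ∈ (Y : Finset V) → z = w) ∧ p'.getLast? = some w) ∧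
          ∀ z ∈ p', z ∈ p) := by
      intro p hp
      obtain ⟨u, w₀, hd, hu, hw₀⟩ := hL₁p p hp
      have hmemY : ∃ a ∈ p, a ∈ (Y : Finset V) := ⟨w₀, (WalkFT.of_dipath hd).mem_last, hw₀⟩
      obtain ⟨s, w, t, rfl, hwY, hsY⟩ := List.first_split hmemY
      have hwalk : WalkFT adj' (s ++ [w]) u w := (WalkFT.of_dipath hd).prefix_split
      have hnodup : (s ++ [w]).Nodup := by
        refine hd.1.2.1.sublist ?_
        have : s ++ w :: t = (s ++ [w]) ++ t := by simp
        rw [this]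
        exact List.sublist_append_left _ _
      refine ⟨s ++ [w], ⟨u, w, ⟨⟨hwalk.1, hnodup, hwalk.2.1⟩, hwalk.2.2.1, hwalk.2.2.2⟩,
        hu, hwY, ?_, hwalk.2.2.2⟩, ?_⟩
      · intro z hz hzY
        rcases List.mem_append.mp hz with hzs | hzw
        · exact absurd hzY (hsY z hzs)
        · simpa using hzw
      · intro z hz
        simp at hz ⊢
        tauto
    -- truncate L₂ at last Y'-vertex
    have htr₂ : ∀ q ∈ L₂, ∃ q' : List V,
        ((∃ w v, DipathFromTo adj' q' w v ∧ w ∈ (Y' : Finset V) ∧ v ∈ T ∧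
          (∀ z ∈ q', z ∈ (Y' : Finset V) → z = w) ∧ q'.head? = some w) ∧
          ∀ z ∈ q', z ∈ q) := by
      intro q hq
      obtain ⟨w₀, v, hd, hw₀, hv⟩ := hL₂p q hq
      have hmemY : ∃ a ∈ q, a ∈ (Y' : Finset V) := ⟨w₀, (WalkFT.of_dipath hd).mem_head, hw₀⟩
      obtain ⟨s, w, t, rfl, hwY, htY⟩ := List.last_split hmemY
      have hwalk : WalkFT adj' (w :: t) w v := (WalkFT.of_dipath hd).suffix_split
      have hnodup : (w :: t).Nodup := hd.1.2.1.sublist (List.sublist_append_right _ _)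
      refine ⟨w :: t, ⟨w, v, ⟨⟨hwalk.1, hnodup, hwalk.2.1⟩, hwalk.2.2.1, hwalk.2.2.2⟩,
        hwY, hv, ?_, rfl⟩, ?_⟩
      · intro z hz hzY
        rcases List.mem_cons.mp hz with rfl | hzt
        · rfl
        · exact absurd hzY (htY z hzt)
      · intro z hz
        simp at hz ⊢
        tauto
    obtain ⟨L₁', hF₁⟩ := List.exists_forall₂ htr₁
    obtain ⟨L₂', hF₂⟩ := List.exists_forall₂ htr₂
    have hL₁'len : L₁'.length = k := by rw [← hF₁.length_eq, hL₁len]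
    have hL₂'len : L₂'.length = k := by rw [← hF₂.length_eq, hL₂len]
    have hL₁'pw : L₁'.Pairwise (fun p q => ∀ z ∈ p, z ∉ q) := by
      refine hF₁.pairwise_right hL₁pw ?_
      rintro a b a' b' ⟨-, ha⟩ ⟨-, hb⟩ hab z hz hz'
      exact hab z (ha z hz) (hb z hz')
    have hL₂'pw : L₂'.Pairwise (fun p q => ∀ z ∈ p, z ∉ q) := by
      refine hF₂.pairwise_right hL₂pw ?_
      rintro a b a' b' ⟨-, ha⟩ ⟨-, hb⟩ hab z hz hz'
      exact hab z (ha z hz) (hb z hz')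
    have hL₁'p : ∀ p ∈ L₁', ∃ u w, DipathFromTo adj' p u w ∧ u ∈ S ∧ w ∈ (Y : Finset V) ∧
        (∀ z ∈ p, z ∈ (Y : Finset V) → z = w) ∧ p.getLast? = some w := by
      intro p hp
      obtain ⟨a, -, ha, -⟩ := hF₁.mem_right hp
      exact ha
    have hL₂'p : ∀ q ∈ L₂', ∃ w v, DipathFromTo adj' q w v ∧ w ∈ (Y' : Finset V) ∧ v ∈ T ∧
        (∀ z ∈ q, z ∈ (Y' : Finset V) → z = w) ∧ q.head? = some w := by
      intro q hq
      obtain ⟨a, -, ha, -⟩ := hF₂.mem_right hq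
      exact ha
    -- ends of L₁' cover Y, heads of L₂' cover Y'
    have hlastmem : ∀ p ∈ L₁', ∃ w, p.getLast? = some w ∧ w ∈ (Y : Finset V) ∧ w ∈ p := by
      intro p hp
      obtain ⟨u, w, hdp, -, hwY, -, hplast⟩ := hL₁'p p hp
      exact ⟨w, hplast, hwY, List.mem_of_mem_getLast? (by rw [hplast]; rfl)⟩
    have hheadmem : ∀ q ∈ L₂', ∃ w, q.head? = some w ∧ w ∈ (Y' : Finset V) ∧ w ∈ q := by
      intro q hq
      obtain ⟨w, v, hdq, hwY', -, -, hqhead⟩ := hL₂'p q hq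
      exact ⟨w, hqhead, hwY', List.mem_of_mem_head? (by rw [hqhead]; rfl)⟩
    have hcover : ∀ (L : List (List V)) (F : List V → Option V) (W : Finset V),
        L.length = k → W.card = k → L.Pairwise (fun p q => ∀ z ∈ p, z ∉ q) →
        (∀ p ∈ L, ∃ w, F p = some w ∧ w ∈ W ∧ w ∈ p) →
        ∀ w ∈ W, ∃ p ∈ L, F p = some w := by
      intro L F W hlen hWcard hpw hmem w hw
      set E : List V := L.map (fun p => (F p).getD x) with hEdef
      have hgetD : ∀ p ∈ L, ∃ w', F p = some w' ∧ (F p).getD x = w' ∧ w' ∈ W ∧ w' ∈ p := by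
        intro p hp
        obtain ⟨w', h1, h2, h3⟩ := hmem p hp
        exact ⟨w', h1, by rw [h1]; rfl, h2, h3⟩
      have hEnodup : E.Nodup := by
        rw [hEdef]
        refine List.pairwise_map.mpr ?_
        refine hpw.imp_of_mem ?_
        intro p q hp hq hdisj heq
        obtain ⟨w₁, -, he₁, -, hw₁p⟩ := hgetD p hp
        obtain ⟨w₂, -, he₂, -, hw₂q⟩ := hgetD q hq
        rw [he₁, he₂] at heq
        exact hdisj w₁ hw₁p (heq ▸ hw₂q)
      have hEsub : E.toFinset ⊆ W := by
        intro a ha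
        rw [List.mem_toFinset, hEdef, List.mem_map] at ha
        obtain ⟨p, hp, hpa⟩ := ha
        obtain ⟨w', -, he, hW, -⟩ := hgetD p hp
        rw [he] at hpa
        exact hpa ▸ hW
      have hEq : E.toFinset = W := by
        apply Finset.eq_of_subset_of_card_le hEsub
        rw [List.toFinset_card_of_nodup hEnodup, hEdef, List.length_map, hlen, hWcard]
      have hwE : w ∈ E := by
        rw [← List.mem_toFinset, hEq]
        exact hw
      rw [hEdef, List.mem_map] at hwE
      obtain ⟨p, hp, hpw'⟩ := hwE
      obtain ⟨w', hF, he, -, -⟩ := hgetD p hp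
      rw [he] at hpw'
      exact ⟨p, hp, by rw [hF, hpw']⟩
    have hcov₂ : ∀ w ∈ (Y' : Finset V), ∃ q ∈ L₂', q.head? = some w :=
      hcover L₂' (fun q => q.head?) Y' hL₂'len hY'card hL₂'pw hheadmem
    -- the key disjointness claim
    have key : ∀ p ∈ L₁', ∀ q ∈ L₂', ∀ z, z ∈ p → z ∈ q →
        z ∈ Z₀ ∧ p.getLast? = some z ∧ q.head? = some z := by
      intro p hp q hq z hzp hzq
      obtain ⟨u, w, hdp, huS, hwY, hpuniq, hplast⟩ := hL₁'p p hp
      obtain ⟨w', v, hdq, hw'Y', hvT, hquniq, hqhead⟩ := hL₂'p q hq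
      obtain ⟨ps, pt, hpsplit⟩ := List.append_of_mem hzp
      obtain ⟨qs, qt, hqsplit⟩ := List.append_of_mem hzq
      have wpre : WalkFT adj' (ps ++ [z]) u z := by
        rw [hpsplit] at hdp
        exact (WalkFT.of_dipath hdp).prefix_split
      have wsuf : WalkFT adj' (z :: qt) z v := by
        rw [hqsplit] at hdq
        exact (WalkFT.of_dipath hdq).suffix_split
      obtain ⟨wapp, happmem⟩ := wpre.append wsuf
      obtain ⟨r, hr, hrmem⟩ := wapp.toPath
      obtain ⟨c, hcZ₀, hcr⟩ := hZ₀sep r u v hr huS hvT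
      have hcsplit : c ∈ ps ++ [z] ∨ c ∈ z :: qt := happmem c (hrmem c hcr)
      have hzc : z = c := by
        rcases hcsplit with hc | hc
        · rcases List.mem_append.mp hc with hcps | hcz
          swap
          · simp at hcz
            exact hcz.symm
          exfalso
          have hcp : c ∈ p := by rw [hpsplit]; simp [hcps]
          have hcY : c ∈ (Y : Finset V) := by simp [hYdef, hcZ₀]
          have hcw : c = w := hpuniq c hcp hcY
          have hwlast : (ps ++ z :: pt).getLast? = some w := by rw [← hpsplit]; exact hplast
          rw [List.getLast?_append_cons] at hwlast
          have hwzpt : w ∈ z :: pt := List.mem_of_mem_getLast? (by rw [hwlast]; rfl)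
          have hnd : (ps ++ z :: pt).Nodup := by rw [← hpsplit]; exact hdp.1.2.1
          rw [List.nodup_append] at hnd
          exact hnd.2.2 w (hcw ▸ hcps) w hwzpt rfl
        · rcases List.mem_cons.mp hc with rfl | hcqt
          · rfl
          exfalso
          have hcq : c ∈ q := by rw [hqsplit]; simp [hcqt]
          have hcY' : c ∈ (Y' : Finset V) := by simp [hY'def, hcZ₀]
          have hcw' : c = w' := hquniq c hcq hcY'
          have hw'head : (qs ++ z :: qt).head? = some w' := by rw [← hqsplit]; exact hqhead
          cases qs with
          | nil =>
            have hzw' : z = w' := by simpa using hw'head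
            have hnd : (z :: qt).Nodup := by
              rw [← List.nil_append (z :: qt), ← hqsplit]
              exact hdq.1.2.1
            rw [List.nodup_cons] at hnd
            refine hnd.1 ?_
            rw [hzw', ← hcw']
            exact hcqt
          | cons a qs' =>
            have haw' : a = w' := by simpa using hw'head
            have hnd : ((a :: qs') ++ z :: qt).Nodup := by rw [← hqsplit]; exact hdq.1.2.1
            rw [List.nodup_append] at hnd
            refine hnd.2.2 w' (show w' ∈ a :: qs' from ?_) w' (show w' ∈ z :: qt from ?_) rfl
            · rw [haw']
              exact List.mem_cons_self
            · exact List.mem_cons_of_mem _ (hcw' ▸ hcqt)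
      subst hzc
      refine ⟨hcZ₀, ?_, ?_⟩
      · have hzw : z = w := hpuniq z hzp (by simp [hYdef, hcZ₀])
        rw [hplast, hzw]
      · have hzw' : z = w' := hquniq z hzq (by simp [hY'def, hcZ₀])
        rw [hqhead, hzw']
    -- gluing
    classical
    set Qf : V → List V := fun w =>
      if hw : ∃ q ∈ L₂', q.head? = some w then hw.choose else [] with hQfdef
    have hQf : ∀ w ∈ (Y' : Finset V), Qf w ∈ L₂' ∧ (Qf w).head? = some w := by
      intro w hw
      have hex := hcov₂ w hw
      rw [hQfdef]
      simp only [dif_pos hex]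
      exact ⟨hex.choose_spec.1, hex.choose_spec.2⟩
    set g : List V → List V := fun p =>
      if p.getLast? = some x then p ++ Qf y else p ++ (Qf (p.getLastD x)).tail with hgdef
    have hglue : ∀ p ∈ L₁', ∃ q ∈ L₂',
        (∀ z ∈ g p, z ∈ p ∨ z ∈ q) ∧ (∃ u v, DipathFromTo adj (g p) u v ∧ u ∈ S ∧ v ∈ T) ∧
        ((p.getLast? = some x ∧ q.head? = some y) ∨
          (∃ w, w ∈ Z₀ ∧ p.getLast? = some w ∧ q.head? = some w)) := by
      intro p hp
      obtain ⟨u, w, hdp, huS, hwY, hpuniq, hplast⟩ := hL₁'p p hp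
      by_cases hlx : p.getLast? = some x
      · have hwx : w = x := by rw [hplast] at hlx; exact Option.some_injective _ hlx
        have hyY' : y ∈ (Y' : Finset V) := by simp [hY'def]
        obtain ⟨hqmem, hqhead⟩ := hQf y hyY'
        set q : List V := Qf y
        obtain ⟨w', v, hdq, hw'Y', hvT, hquniq, hqhead'⟩ := hL₂'p q hqmem
        have hw'y : w' = y := by
          rw [hqhead'] at hqhead
          exact Option.some_injective _ hqhead
        have hdisj : ∀ z, z ∈ p → z ∈ q → False := by
          intro z hzp hzq
          obtain ⟨hzZ₀, hzlast, -⟩ := key p hp q hqmem z hzp hzq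
          rw [hplast] at hzlast
          have : w = z := Option.some_injective _ hzlast
          rw [← this, hwx] at hzZ₀
          exact hxZ₀ hzZ₀
        have hdp' : DipathFromTo adj p u x := by
          rw [← hwx]
          exact dipath_mono hmono hdp
        have hdq' : DipathFromTo adj q y v := by
          rw [← hw'y]
          exact dipath_mono hmono hdq
        obtain ⟨hglued, hmemg⟩ := dipath_glue_edge hdp' hdq' hxy hdisj
        refine ⟨q, hqmem, ?_, ⟨u, v, ?_, huS, hvT⟩, Or.inl ⟨hlx, hqhead⟩⟩
        · intro z hz
          rw [hgdef] at hz
          simp only [if_pos hlx] at hz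
          exact hmemg z hz
        · rw [hgdef]
          simp only [if_pos hlx]
          exact hglued
      · have hwZ₀ : w ∈ Z₀ := by
          have hwx : w ≠ x := by
            intro hwx
            rw [hwx] at hplast
            exact hlx hplast
          rw [hYdef] at hwY
          rcases Finset.mem_insert.mp hwY with h' | h'
          · exact absurd h' hwx
          · exact h'
        have hgetD : p.getLastD x = w := by rw [List.getLastD_eq_getLast?, hplast]; rfl
        have hwY' : w ∈ (Y' : Finset V) := by simp [hY'def, hwZ₀]
        obtain ⟨hqmem, hqhead⟩ := hQf w hwY'
        set q : List V := Qf w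
        obtain ⟨w', v, hdq, hw'Y', hvT, hquniq, hqhead'⟩ := hL₂'p q hqmem
        have hw'w : w' = w := by
          rw [hqhead'] at hqhead
          exact Option.some_injective _ hqhead
        have hdisj : ∀ z, z ∈ p → z ∈ q → z = w := by
          intro z hzp hzq
          obtain ⟨hzZ₀, hzlast, -⟩ := key p hp q hqmem z hzp hzq
          rw [hplast] at hzlast
          exact (Option.some_injective _ hzlast).symm
        have hdp' : DipathFromTo adj p u w := dipath_mono hmono hdp
        have hdq' : DipathFromTo adj q w v := by
          rw [← hw'w]
          exact dipath_mono hmono hdq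
        obtain ⟨hglued, hmemg⟩ := dipath_glue hdp' hdq' hdisj
        refine ⟨q, hqmem, ?_, ⟨u, v, ?_, huS, hvT⟩, Or.inr ⟨w, hwZ₀, hplast, hqhead⟩⟩
        · intro z hz
          rw [hgdef] at hz
          simp only [if_neg hlx, hgetD] at hz
          exact hmemg z hz
        · rw [hgdef]
          simp only [if_neg hlx, hgetD]
          exact hglued
    -- final assembly
    refine ⟨L₁'.map g, by rw [List.length_map, hL₁'len], ?_, ?_⟩
    · rw [List.pairwise_map]
      refine hL₁'pw.imp_of_mem ?_
      intro p₁ p₂ hp₁ hp₂ hdisj z hz₁ hz₂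
      obtain ⟨q₁, hq₁mem, hmem₁, -, hcase₁⟩ := hglue p₁ hp₁
      obtain ⟨q₂, hq₂mem, hmem₂, -, hcase₂⟩ := hglue p₂ hp₂
      have hz₁' := hmem₁ z hz₁
      have hz₂' := hmem₂ z hz₂
      have hdisj' : ∀ z', z' ∈ p₂ → z' ∉ p₁ := by
        intro z' h2 h1
        exact hdisj z' h1 h2
      rcases hz₁' with hzp₁ | hzq₁ <;> rcases hz₂' with hzp₂ | hzq₂
      · exact hdisj z hzp₁ hzp₂
      · -- z ∈ p₁ and z ∈ q₂
        obtain ⟨hzZ₀, hzlast₁, hzhead₂⟩ := key p₁ hp₁ q₂ hq₂mem z hzp₁ hzq₂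
        rcases hcase₂ with ⟨-, hq₂y⟩ | ⟨w₂, hw₂Z₀, hp₂last, hq₂head⟩
        · rw [hq₂y] at hzhead₂
          have : y = z := Option.some_injective _ hzhead₂
          rw [← this] at hzZ₀
          exact hyZ₀ hzZ₀
        · rw [hq₂head] at hzhead₂
          have hzw₂ : w₂ = z := Option.some_injective _ hzhead₂
          have : z ∈ p₂ := by
            rw [← hzw₂]
            exact List.mem_of_mem_getLast? (by rw [hp₂last]; rfl)
          exact hdisj z hzp₁ this
      · -- z ∈ q₁ and z ∈ p₂
        obtain ⟨hzZ₀, hzlast₂, hzhead₁⟩ := key p₂ hp₂ q₁ hq₁mem z hzp₂ hzq₁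
        rcases hcase₁ with ⟨-, hq₁y⟩ | ⟨w₁, hw₁Z₀, hp₁last, hq₁head⟩
        · rw [hq₁y] at hzhead₁
          have : y = z := Option.some_injective _ hzhead₁
          rw [← this] at hzZ₀
          exact hyZ₀ hzZ₀
        · rw [hq₁head] at hzhead₁
          have hzw₁ : w₁ = z := Option.some_injective _ hzhead₁
          have : z ∈ p₁ := by
            rw [← hzw₁]
            exact List.mem_of_mem_getLast? (by rw [hp₁last]; rfl)
          exact hdisj z this hzp₂
      · -- z ∈ q₁ and z ∈ q₂
        have hqq : q₁ ≠ q₂ := by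
          intro hqeq
          rcases hcase₁ with ⟨hp₁x, hq₁y⟩ | ⟨w₁, hw₁Z₀, hp₁last, hq₁head⟩ <;>
            rcases hcase₂ with ⟨hp₂x, hq₂y⟩ | ⟨w₂, hw₂Z₀, hp₂last, hq₂head⟩
          · have hx₁ : x ∈ p₁ := List.mem_of_mem_getLast? (by rw [hp₁x]; rfl)
            have hx₂ : x ∈ p₂ := List.mem_of_mem_getLast? (by rw [hp₂x]; rfl)
            exact hdisj x hx₁ hx₂
          · rw [hqeq, hq₂head] at hq₁y
            have : w₂ = y := Option.some_injective _ hq₁y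
            rw [this] at hw₂Z₀
            exact hyZ₀ hw₂Z₀
          · rw [← hqeq, hq₁head] at hq₂y
            have : w₁ = y := Option.some_injective _ hq₂y
            rw [this] at hw₁Z₀
            exact hyZ₀ hw₁Z₀
          · rw [hqeq, hq₂head] at hq₁head
            have hww : w₁ = w₂ := (Option.some_injective _ hq₁head).symm
            have h1 : w₁ ∈ p₁ := List.mem_of_mem_getLast? (by rw [hp₁last]; rfl)
            have h2 : w₁ ∈ p₂ := by
              rw [hww]
              exact List.mem_of_mem_getLast? (by rw [hp₂last]; rfl)
            exact hdisj w₁ h1 h2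
        have hsymm : Symmetric (fun (p q : List V) => ∀ z ∈ p, z ∉ q) := by
          intro a b hab z hza hzb
          exact hab z hzb hza
        haveI : Std.Symm (fun (p q : List V) => ∀ z ∈ p, z ∉ q) := ⟨fun a b h => hsymm h⟩
        exact hL₂'pw.forall hq₁mem hq₂mem hqq z hzq₁ hzq₂
    · intro r hr
      rw [List.mem_map] at hr
      obtain ⟨p, hp, rfl⟩ := hr
      obtain ⟨q, -, -, hpath, -⟩ := hglue p hp
      exact hpath

end Menger2

theorem menger {V : Type} [Fintype V] [DecidableEq V] (adj : V → V → Prop)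
    (S T : Finset V) (k : ℕ) (h : ∀ Z, VSep adj S T Z → k ≤ Z.card) :
    ∃ L : List (List V), L.length = k ∧ L.Pairwise (fun p q => ∀ z ∈ p, z ∉ q) ∧
      ∀ p ∈ L, ∃ u v, DipathFromTo adj p u v ∧ u ∈ S ∧ v ∈ T :=
  menger_aux (edgeCount adj) adj S T k le_rfl h

theorem list_cover {V : Type} [DecidableEq V] (L : List (List V)) (F : List V → Option V)
    (W : Finset V) (hlen : L.length = W.card)
    (hpw : L.Pairwise (fun p q => ∀ z ∈ p, z ∉ q))
    (hmem : ∀ p ∈ L, ∃ w, F p = some w ∧ w ∈ W ∧ w ∈ p) :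
    ∀ w ∈ W, ∃ p ∈ L, F p = some w := by
  intro w hw
  set E : List V := L.map (fun p => (F p).getD w) with hEdef
  have hgetD : ∀ p ∈ L, ∃ w', F p = some w' ∧ (F p).getD w = w' ∧ w' ∈ W ∧ w' ∈ p := by
    intro p hp
    obtain ⟨w', h1, h2, h3⟩ := hmem p hp
    exact ⟨w', h1, by rw [h1]; rfl, h2, h3⟩
  have hEnodup : E.Nodup := by
    rw [hEdef]
    refine List.pairwise_map.mpr ?_
    refine hpw.imp_of_mem ?_
    intro p q hp hq hdisj heq
    obtain ⟨w₁, -, he₁, -, hw₁p⟩ := hgetD p hp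
    obtain ⟨w₂, -, he₂, -, hw₂q⟩ := hgetD q hq
    rw [he₁, he₂] at heq
    exact hdisj w₁ hw₁p (heq ▸ hw₂q)
  have hEsub : E.toFinset ⊆ W := by
    intro a ha
    rw [List.mem_toFinset, hEdef, List.mem_map] at ha
    obtain ⟨p, hp, hpa⟩ := ha
    obtain ⟨w', -, he, hW, -⟩ := hgetD p hp
    rw [he] at hpa
    exact hpa ▸ hW
  have hEq : E.toFinset = W := by
    apply Finset.eq_of_subset_of_card_le hEsub
    rw [List.toFinset_card_of_nodup hEnodup, hEdef, List.length_map, hlen]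
  have hwE : w ∈ E := by
    rw [← List.mem_toFinset, hEq]
    exact hw
  rw [hEdef, List.mem_map] at hwE
  obtain ⟨p, hp, hpw'⟩ := hwE
  obtain ⟨w', hF, he, -, -⟩ := hgetD p hp
  rw [he] at hpw'
  exact ⟨p, hp, by rw [hF, hpw']⟩

/-- If `x` can reach `C` and be reached from `C` by walks inside `W`, where `C` is a strong
component of `W`, then `x ∈ C`. -/
theorem absorb {V : Type*} {A : V → V → Prop} {W C : Set V}
    (hC : IsStrongComponent A W C) {x c c' : V} (hc : c ∈ C) (hc' : c' ∈ C)
    {P Q : List V} (hP : WalkFT A P x c) (hPW : ∀ z ∈ P, z ∈ W)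
    (hQ : WalkFT A Q c' x) (hQW : ∀ z ∈ Q, z ∈ W) : x ∈ C := by
  classical
  set C' : Set V := C ∪ {z | z ∈ P} ∪ {z | z ∈ Q} with hC'def
  have hC'W : C' ⊆ W := by
    intro z hz
    rcases hz with (hz | hz) | hz
    · exact hC.1 hz
    · exact hPW z hz
    · exact hQW z hz
  have hCC' : C ⊆ C' := fun z hz => Or.inl (Or.inl hz)
  have hPC' : ∀ z ∈ P, z ∈ C' := fun z hz => Or.inl (Or.inr hz)
  have hQC' : ∀ z ∈ Q, z ∈ C' := fun z hz => Or.inr hz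
  set R : V → V → Prop := fun a b => ∃ l, WalkFT A l a b ∧ ∀ z ∈ l, z ∈ C' with hRdef
  have hRtrans : ∀ a b d, R a b → R b d → R a d := by
    rintro a b d ⟨l, hl, hlm⟩ ⟨m, hm, hmm⟩
    obtain ⟨hw, hmem⟩ := hl.append hm
    refine ⟨l ++ m.tail, hw, ?_⟩
    intro z hz
    rcases hmem z hz with hz' | hz'
    · exact hlm z hz'
    · exact hmm z hz'
  have hRC : ∀ a ∈ C, ∀ b ∈ C, R a b := by
    intro a ha b hb
    obtain ⟨l, ⟨hd, hmem⟩, hh, hl⟩ := hC.2.2.1 a ha b hb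
    exact ⟨l, ⟨hd.1, hd.2.2, hh, hl⟩, fun z hz => hCC' (hmem z hz)⟩
  have hRPsuf : ∀ z ∈ P, R z c := by
    intro z hz
    obtain ⟨l, hl, hmem⟩ := hP.suffix_from hz
    exact ⟨l, hl, fun z' hz' => hPC' z' (hmem z' hz')⟩
  have hRPpre : ∀ z ∈ P, R x z := by
    intro z hz
    obtain ⟨l, hl, hmem⟩ := hP.prefix_to hz
    exact ⟨l, hl, fun z' hz' => hPC' z' (hmem z' hz')⟩
  have hRQsuf : ∀ z ∈ Q, R z x := by
    intro z hz
    obtain ⟨l, hl, hmem⟩ := hQ.suffix_from hz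
    exact ⟨l, hl, fun z' hz' => hQC' z' (hmem z' hz')⟩
  have hRQpre : ∀ z ∈ Q, R c' z := by
    intro z hz
    obtain ⟨l, hl, hmem⟩ := hQ.prefix_to hz
    exact ⟨l, hl, fun z' hz' => hQC' z' (hmem z' hz')⟩
  have hRxc : R x c := hRPsuf x hP.mem_head
  have hRc'x : R c' x := hRQsuf c' hQ.mem_head
  have htoC : ∀ u ∈ C', R u c := by
    intro u hu
    rcases hu with (hu | hu) | hu
    · exact hRC u hu c hc
    · exact hRPsuf u hu
    · exact hRtrans _ _ _ (hRQsuf u hu) hRxc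
  have hfromC : ∀ v ∈ C', R c v := by
    intro v hv
    rcases hv with (hv | hv) | hv
    · exact hRC c hc v hv
    · exact hRtrans _ _ _ (hRtrans _ _ _ (hRC c hc c' hc') hRc'x) (hRPpre v hv)
    · exact hRtrans _ _ _ (hRC c hc c' hc') (hRQpre v hv)
  have hstrong : StrongOn A C' := by
    intro u hu v hv
    obtain ⟨l, hl, hmem⟩ := hRtrans _ _ _ (htoC u hu) (hfromC v hv)
    obtain ⟨l', hd, hsub⟩ := hl.toPath
    exact ⟨l', ⟨hd.1, fun z hz => hmem z (hsub z hz)⟩, hd.2.1, hd.2.2⟩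
  have : C' = C := hC.2.2.2 C' hCC' hC'W hstrong
  rw [← this]
  exact hPC' x hP.mem_head

/-- If a finite digraph has a haven of order `3n` (with `n ≥ 1`),
then it has a linked set of size exactly `2n`. -/
theorem haven_gives_linked_set {V : Type} [Fintype V] [DecidableEq V]
    (n : ℕ) (hn : 0 < n) (A : V → V → Prop)
    (hH : HasHaven A (3 * n)) :
    ∃ X : Finset V, X.card = 2 * n ∧ Linked A X := by
  classical
  obtain ⟨B, hB⟩ := hH
  have hBsc : ∀ Z : Finset V, Z.card < 3 * n → IsStrongComponent A (Set.univ \ ↑Z) (B Z) :=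
    fun Z h => (hB Z (by simp) h).1
  have hBmono : ∀ Z : Finset V, Z.card < 3 * n → ∀ Z' ⊆ Z, B Z ⊆ B Z' :=
    fun Z h => (hB Z (by simp) h).2
  have hBne : ∀ Z : Finset V, Z.card < 3 * n → (B Z).Nonempty := fun Z h => (hBsc Z h).2.1
  have hBdisj : ∀ Z : Finset V, Z.card < 3 * n → ∀ z ∈ B Z, z ∉ Z := by
    intro Z h z hz hzZ
    have := (hBsc Z h).1 hz
    exact this.2 hzZ
  have hBbig : ∀ Z : Finset V, Z.card < 3 * n → 3 * n ≤ Z.card + (B Z).ncard := by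
    intro Z hZ
    by_contra hlt
    push_neg at hlt
    set F : Finset V := (Set.toFinite (B Z)).toFinset with hFdef
    have hFcard : F.card = (B Z).ncard := (Set.ncard_eq_toFinset_card _ _).symm
    set T : Finset V := Z ∪ F with hTdef
    have hTcard : T.card < 3 * n := by
      show (Z ∪ F).card < 3 * n
      have h1 := Finset.card_union_le Z F
      omega
    obtain ⟨z, hz⟩ := hBne T hTcard
    have hzBZ : z ∈ B Z := hBmono T hTcard Z Finset.subset_union_left hz
    have hzF : z ∈ F := by
      rw [hFdef, Set.Finite.mem_toFinset]
      exact hzBZ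
    exact hBdisj T hTcard z hz (by rw [hTdef]; exact Finset.mem_union_right _ hzF)
  have h3n : (0 : ℕ) < 3 * n := by omega
  have hVbig : 2 * n ≤ Fintype.card V := by
    have h1 := hBbig ∅ (by simpa using h3n)
    have h2 : (B ∅).ncard ≤ Fintype.card V := by
      have := Set.ncard_le_ncard (Set.subset_univ (B ∅)) (Set.toFinite _)
      rwa [Set.ncard_univ, Nat.card_eq_fintype_card] at this
    simp at h1
    omega
  obtain ⟨X₀, -, hX₀card⟩ := Finset.exists_subset_card_eq
    (show 2 * n ≤ (Finset.univ : Finset V).card by rwa [Finset.card_univ])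
  obtain ⟨X, hX𝒳, hXmin⟩ := Finset.exists_min_image (Finset.univ.powersetCard (2 * n))
    (fun Y => (B Y).ncard) ⟨X₀, Finset.mem_powersetCard_univ.mpr hX₀card⟩
  have hXcard : X.card = 2 * n := Finset.mem_powersetCard_univ.mp hX𝒳
  have hXlt : X.card < 3 * n := by omega
  refine ⟨X, hXcard, ?_⟩
  intro S T hS hT hST
  by_cases hMen : ∀ Z, VSep A S T Z → S.card ≤ Z.card
  · -- use Menger to produce the linkage
    obtain ⟨L, hLlen, hLpw, hLp⟩ := menger A S T S.card hMen
    have hcovS : ∀ a ∈ S, ∃ p ∈ L, p.head? = some a := by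
      apply list_cover L (fun p => p.head?) S (by rw [hLlen]) hLpw
      intro p hp
      obtain ⟨u, v, hd, hu, -⟩ := hLp p hp
      exact ⟨u, hd.2.1, hu, List.mem_of_mem_head? (by rw [hd.2.1]; rfl)⟩
    set P : V → List V := fun a =>
      if h : ∃ p ∈ L, p.head? = some a then h.choose else [] with hPdef
    set τ : V → V := fun a => ((P a).getLast?).getD a with hτdef
    have hPa : ∀ a ∈ S, P a ∈ L ∧ (P a).head? = some a := by
      intro a ha
      have hex := hcovS a ha
      rw [hPdef]
      simp only [dif_pos hex]
      exact ⟨hex.choose_spec.1, hex.choose_spec.2⟩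
    refine ⟨P, τ, ⟨?_, ?_⟩⟩
    · intro a ha
      obtain ⟨hmem, hhead⟩ := hPa a ha
      obtain ⟨u, v, hd, -, hv⟩ := hLp _ hmem
      have hua : u = a := by
        rw [hd.2.1] at hhead
        exact Option.some_injective _ hhead
      have hτa : τ a = v := by
        show ((P a).getLast?).getD a = v
        rw [hd.2.2]
        rfl
      rw [hτa]
      rw [hua] at hd
      exact ⟨hv, hd⟩
    · intro a₁ h₁ a₂ h₂ hne z hz₁ hz₂
      obtain ⟨hm₁, hh₁⟩ := hPa a₁ h₁
      obtain ⟨hm₂, hh₂⟩ := hPa a₂ h₂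
      have hPne : P a₁ ≠ P a₂ := by
        intro heq
        rw [heq, hh₂] at hh₁
        exact hne (Option.some_injective _ hh₁).symm
      have hsymm : Symmetric (fun (p q : List V) => ∀ z ∈ p, z ∉ q) := by
        intro a b hab z hza hzb
        exact hab z hzb hza
      haveI : Std.Symm (fun (p q : List V) => ∀ z ∈ p, z ∉ q) := ⟨fun a b h => hsymm h⟩
      exact hLpw.forall hm₁ hm₂ hPne z hz₁ hz₂
  · -- derive a contradiction with the minimality of `B X`
    exfalso
    push_neg at hMen
    obtain ⟨Z, hZsep, hZcard⟩ := hMen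
    have hSTZ : S ∩ T ⊆ Z := by
      intro v hv
      obtain ⟨z, hzZ, hzl⟩ := hZsep [v] v v ⟨⟨by simp, by simp, List.isChain_singleton _⟩, rfl, rfl⟩
        (Finset.mem_inter.mp hv).1 (Finset.mem_inter.mp hv).2
      simp at hzl
      rwa [hzl] at hzZ
    set W : Finset V := X ∪ Z with hWdef
    have hZX : (Z \ X).card + (Z ∩ X).card = Z.card := Finset.card_sdiff_add_card_inter Z X
    have hSTinter : S ∩ T ⊆ Z ∩ X := by
      intro v hv
      exact Finset.mem_inter.mpr ⟨hSTZ hv, hS (Finset.mem_inter.mp hv).1⟩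
    have hSTcard : (S ∪ T).card + (S ∩ T).card = S.card + T.card :=
      Finset.card_union_add_card_inter S T
    have hSUT : (S ∪ T).card ≤ 2 * n := by
      rw [← hXcard]
      exact Finset.card_le_card (Finset.union_subset hS hT)
    have hZXle : (S ∩ T).card ≤ (Z ∩ X).card := Finset.card_le_card hSTinter
    have hWcard : W.card < 3 * n := by
      have h1 : (X ∪ Z).card ≤ X.card + (Z \ X).card := by
        rw [← Finset.union_sdiff_self_eq_union]
        exact Finset.card_union_le _ _
      show (X ∪ Z).card < 3 * n
      omega
    have hXW : X ⊆ W := Finset.subset_union_left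
    have hZW : Z ⊆ W := Finset.subset_union_right
    set C : Set V := B W with hCdef
    have hCX : C ⊆ B X := hBmono W hWcard X hXW
    have hCW : ∀ z ∈ C, z ∉ W := hBdisj W hWcard
    have hCne : C.Nonempty := hBne W hWcard
    have hCstrong : StrongOn A C := (hBsc W hWcard).2.2.1
    have hCbig : 3 * n ≤ W.card + C.ncard := hBbig W hWcard
    -- not both: some S-vertex reaches C avoiding Z, and C reaches some T-vertex avoiding Z
    have hnotboth : ¬((∃ a ∈ S, ∃ l c, WalkFT A l a c ∧ c ∈ C ∧ ∀ z ∈ l, z ∉ Z) ∧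
        (∃ b ∈ T, ∃ l c, WalkFT A l c b ∧ c ∈ C ∧ ∀ z ∈ l, z ∉ Z)) := by
      rintro ⟨⟨a, haS, l₁, c, hw₁, hcC, hl₁Z⟩, ⟨b, hbT, l₂, c', hw₂, hc'C, hl₂Z⟩⟩
      obtain ⟨l₃, ⟨hd₃, hm₃⟩, hh₃, hl₃⟩ := hCstrong c hcC c' hc'C
      have hw₃ : WalkFT A l₃ c c' := ⟨hd₃.1, hd₃.2.2, hh₃, hl₃⟩
      obtain ⟨w₁₃, hm₁₃⟩ := hw₁.append hw₃
      obtain ⟨w, hm⟩ := w₁₃.append hw₂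
      obtain ⟨r, hr, hrm⟩ := w.toPath
      obtain ⟨z, hzZ, hzr⟩ := hZsep r a b hr haS hbT
      rcases hm z (hrm z hzr) with hz | hz
      · rcases hm₁₃ z hz with hz' | hz'
        · exact hl₁Z z hz' hzZ
        · exact hCW z (hm₃ z hz') (hZW hzZ)
      · exact hl₂Z z hz hzZ
    by_cases hR1 : ∃ a ∈ S, ∃ l c, WalkFT A l a c ∧ c ∈ C ∧ ∀ z ∈ l, z ∉ Z
    · -- then no walk from C to T avoiding Z; swap out T
      have hR2 : ¬ ∃ b ∈ T, ∃ l c, WalkFT A l c b ∧ c ∈ C ∧ ∀ z ∈ l, z ∉ Z :=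
        fun h2 => hnotboth ⟨hR1, h2⟩
      set M : Finset V := (X \ T) ∪ Z with hMdef
      have hMW : M ⊆ W :=
        Finset.union_subset (Finset.Subset.trans (Finset.sdiff_subset) hXW) hZW
      have hMcard : M.card < 3 * n := lt_of_le_of_lt (Finset.card_le_card hMW) hWcard
      have hM2 : M.card + 1 ≤ 2 * n := by
        have h1 : M.card ≤ (X \ T).card + Z.card := Finset.card_union_le _ _
        have h2 : (X \ T).card + T.card = X.card := Finset.card_sdiff_add_card_eq_card hT
        omega
      set C₂ : Set V := B M with hC₂def
      have hCC₂ : C ⊆ C₂ := hBmono W hWcard M hMW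
      have hC₂disj : ∀ z ∈ C₂, z ∉ M := hBdisj M hMcard
      have hC₂strong : StrongOn A C₂ := (hBsc M hMcard).2.2.1
      have hTZn : (T \ Z).card ≤ n := by
        have h1 : (T \ Z).card + (T ∩ Z).card = T.card := Finset.card_sdiff_add_card_inter T Z
        have h2 : (S ∩ T).card ≤ (T ∩ Z).card := by
          refine Finset.card_le_card ?_
          intro v hv
          exact Finset.mem_inter.mpr ⟨(Finset.mem_inter.mp hv).2, hSTZ hv⟩
        omega
      have hWM : W.card ≤ M.card + (T \ Z).card := by
        have hsub : W ⊆ M ∪ (T \ Z) := by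
          intro z hz
          rcases Finset.mem_union.mp hz with hzX | hzZ
          · by_cases hzT : z ∈ T
            · by_cases hzZ' : z ∈ Z
              · exact Finset.mem_union_left _ (Finset.mem_union_right _ hzZ')
              · exact Finset.mem_union_right _ (Finset.mem_sdiff.mpr ⟨hzT, hzZ'⟩)
            · exact Finset.mem_union_left _
                (Finset.mem_union_left _ (Finset.mem_sdiff.mpr ⟨hzX, hzT⟩))
          · exact Finset.mem_union_left _ (Finset.mem_union_right _ hzZ)
        calc W.card ≤ (M ∪ (T \ Z)).card := Finset.card_le_card hsub
          _ ≤ M.card + (T \ Z).card := Finset.card_union_le _ _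
      have hCn : (Set.toFinite C).toFinset.card = C.ncard := (Set.ncard_eq_toFinset_card _ _).symm
      obtain ⟨Sf, hSfsub, hSfcard⟩ := Finset.exists_subset_card_eq
        (show 2 * n - M.card ≤ (Set.toFinite C).toFinset.card by omega)
      set X' : Finset V := M ∪ Sf with hX'def
      have hSfC : ∀ z ∈ Sf, z ∈ C := fun z hz => (Set.Finite.mem_toFinset _).mp (hSfsub hz)
      have hSfW : ∀ z ∈ Sf, z ∉ W := fun z hz => hCW z (hSfC z hz)
      have hX'card : X'.card = 2 * n := by
        rw [hX'def, Finset.card_union_of_disjoint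
          (Finset.disjoint_left.mpr fun z hzM hzSf => hSfW z hzSf (hMW hzM)), hSfcard]
        omega
      have hX'lt : X'.card < 3 * n := by omega
      have hBX'sub : B X' ⊆ C := by
        intro x hx
        have hxC₂ : x ∈ C₂ := hBmono X' hX'lt M Finset.subset_union_left hx
        obtain ⟨c₀, hc₀⟩ := hCne
        have hc₀C₂ : c₀ ∈ C₂ := hCC₂ hc₀
        obtain ⟨lP, ⟨hdP, hmP⟩, hhP, hlP⟩ := hC₂strong c₀ hc₀C₂ x hxC₂
        obtain ⟨lQ, ⟨hdQ, hmQ⟩, hhQ, hlQ⟩ := hC₂strong x hxC₂ c₀ hc₀C₂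
        have hwP : WalkFT A lP c₀ x := ⟨hdP.1, hdP.2.2, hhP, hlP⟩
        have hwQ : WalkFT A lQ x c₀ := ⟨hdQ.1, hdQ.2.2, hhQ, hlQ⟩
        have hmPZ : ∀ z ∈ lP, z ∉ Z := fun z hz hzZ =>
          hC₂disj z (hmP z hz) (Finset.mem_union_right _ hzZ)
        have hmQZ : ∀ z ∈ lQ, z ∉ Z := fun z hz hzZ =>
          hC₂disj z (hmQ z hz) (Finset.mem_union_right _ hzZ)
        have hmPXT : ∀ z ∈ lP, z ∉ X \ T := fun z hz hzX =>
          hC₂disj z (hmP z hz) (Finset.mem_union_left _ hzX)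
        have hmQXT : ∀ z ∈ lQ, z ∉ X \ T := fun z hz hzX =>
          hC₂disj z (hmQ z hz) (Finset.mem_union_left _ hzX)
        have hPnoT : ∀ z ∈ lP, z ∉ T := by
          intro z hz hzT
          obtain ⟨l', hl', hm'⟩ := hwP.prefix_to hz
          exact hR2 ⟨z, hzT, l', c₀, hl', hc₀, fun y hy => hmPZ y (hm' y hy)⟩
        have hQnoT : ∀ z ∈ lQ, z ∉ T := by
          intro z hz hzT
          obtain ⟨l', hl', hm'⟩ := hwQ.prefix_to hz
          obtain ⟨w2, hm2⟩ := hwP.append hl'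
          refine hR2 ⟨z, hzT, _, c₀, w2, hc₀, ?_⟩
          intro yy hyy
          rcases hm2 yy hyy with hy | hy
          · exact hmPZ yy hy
          · exact fun hyZ => hmQZ yy (hm' yy hy) hyZ
        have hPavoid : ∀ z ∈ lP, z ∈ Set.univ \ (↑W : Set V) := by
          intro z hz
          refine ⟨trivial, ?_⟩
          intro hzW
          rcases Finset.mem_union.mp hzW with hzX | hzZ
          · by_cases hzT : z ∈ T
            · exact hPnoT z hz hzT
            · exact hmPXT z hz (Finset.mem_sdiff.mpr ⟨hzX, hzT⟩)
          · exact hmPZ z hz hzZ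
        have hQavoid : ∀ z ∈ lQ, z ∈ Set.univ \ (↑W : Set V) := by
          intro z hz
          refine ⟨trivial, ?_⟩
          intro hzW
          rcases Finset.mem_union.mp hzW with hzX | hzZ
          · by_cases hzT : z ∈ T
            · exact hQnoT z hz hzT
            · exact hmQXT z hz (Finset.mem_sdiff.mpr ⟨hzX, hzT⟩)
          · exact hmQZ z hz hzZ
        exact absorb (hBsc W hWcard) hc₀ hc₀ hwQ hQavoid hwP hPavoid
      obtain ⟨s₀, hs₀⟩ : Sf.Nonempty := Finset.card_pos.mp (by omega)
      have hs₀BX : s₀ ∈ B X := hCX (hSfC s₀ hs₀)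
      have hs₀BX' : s₀ ∉ B X' := fun hmem =>
        hBdisj X' hX'lt s₀ hmem (Finset.mem_union_right _ hs₀)
      have hstrict : (B X').ncard < (B X).ncard := by
        have hsub2 : B X' ⊆ (B X) \ {s₀} := by
          intro z hz
          refine ⟨hCX (hBX'sub hz), ?_⟩
          intro hzs
          rw [Set.mem_singleton_iff] at hzs
          rw [hzs] at hz
          exact hs₀BX' hz
        calc (B X').ncard ≤ ((B X) \ {s₀}).ncard :=
              Set.ncard_le_ncard hsub2 (Set.toFinite _)
          _ < (B X).ncard := Set.ncard_diff_singleton_lt_of_mem hs₀BX (Set.toFinite _)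
      have := hXmin X' (Finset.mem_powersetCard_univ.mpr hX'card)
      omega
    · -- no walk from S to C avoiding Z; swap out S
      set M : Finset V := (X \ S) ∪ Z with hMdef
      have hMW : M ⊆ W :=
        Finset.union_subset (Finset.Subset.trans (Finset.sdiff_subset) hXW) hZW
      have hMcard : M.card < 3 * n := lt_of_le_of_lt (Finset.card_le_card hMW) hWcard
      have hM2 : M.card + 1 ≤ 2 * n := by
        have h1 : M.card ≤ (X \ S).card + Z.card := Finset.card_union_le _ _
        have h2 : (X \ S).card + S.card = X.card := Finset.card_sdiff_add_card_eq_card hS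
        omega
      set C₂ : Set V := B M with hC₂def
      have hCC₂ : C ⊆ C₂ := hBmono W hWcard M hMW
      have hC₂disj : ∀ z ∈ C₂, z ∉ M := hBdisj M hMcard
      have hC₂strong : StrongOn A C₂ := (hBsc M hMcard).2.2.1
      have hSZn : (S \ Z).card ≤ n := by
        have h1 : (S \ Z).card + (S ∩ Z).card = S.card := Finset.card_sdiff_add_card_inter S Z
        have h2 : (S ∩ T).card ≤ (S ∩ Z).card := by
          refine Finset.card_le_card ?_
          intro v hv
          exact Finset.mem_inter.mpr ⟨(Finset.mem_inter.mp hv).1, hSTZ hv⟩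
        omega
      have hWM : W.card ≤ M.card + (S \ Z).card := by
        have hsub : W ⊆ M ∪ (S \ Z) := by
          intro z hz
          rcases Finset.mem_union.mp hz with hzX | hzZ
          · by_cases hzS : z ∈ S
            · by_cases hzZ' : z ∈ Z
              · exact Finset.mem_union_left _ (Finset.mem_union_right _ hzZ')
              · exact Finset.mem_union_right _ (Finset.mem_sdiff.mpr ⟨hzS, hzZ'⟩)
            · exact Finset.mem_union_left _
                (Finset.mem_union_left _ (Finset.mem_sdiff.mpr ⟨hzX, hzS⟩))
          · exact Finset.mem_union_left _ (Finset.mem_union_right _ hzZ)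
        calc W.card ≤ (M ∪ (S \ Z)).card := Finset.card_le_card hsub
          _ ≤ M.card + (S \ Z).card := Finset.card_union_le _ _
      have hCn : (Set.toFinite C).toFinset.card = C.ncard := (Set.ncard_eq_toFinset_card _ _).symm
      obtain ⟨Sf, hSfsub, hSfcard⟩ := Finset.exists_subset_card_eq
        (show 2 * n - M.card ≤ (Set.toFinite C).toFinset.card by omega)
      set X' : Finset V := M ∪ Sf with hX'def
      have hSfC : ∀ z ∈ Sf, z ∈ C := fun z hz => (Set.Finite.mem_toFinset _).mp (hSfsub hz)
      have hSfW : ∀ z ∈ Sf, z ∉ W := fun z hz => hCW z (hSfC z hz)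
      have hX'card : X'.card = 2 * n := by
        rw [hX'def, Finset.card_union_of_disjoint
          (Finset.disjoint_left.mpr fun z hzM hzSf => hSfW z hzSf (hMW hzM)), hSfcard]
        omega
      have hX'lt : X'.card < 3 * n := by omega
      have hBX'sub : B X' ⊆ C := by
        intro x hx
        have hxC₂ : x ∈ C₂ := hBmono X' hX'lt M Finset.subset_union_left hx
        obtain ⟨c₀, hc₀⟩ := hCne
        have hc₀C₂ : c₀ ∈ C₂ := hCC₂ hc₀
        obtain ⟨lP, ⟨hdP, hmP⟩, hhP, hlP⟩ := hC₂strong x hxC₂ c₀ hc₀C₂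
        obtain ⟨lQ, ⟨hdQ, hmQ⟩, hhQ, hlQ⟩ := hC₂strong c₀ hc₀C₂ x hxC₂
        have hwP : WalkFT A lP x c₀ := ⟨hdP.1, hdP.2.2, hhP, hlP⟩
        have hwQ : WalkFT A lQ c₀ x := ⟨hdQ.1, hdQ.2.2, hhQ, hlQ⟩
        have hmPZ : ∀ z ∈ lP, z ∉ Z := fun z hz hzZ =>
          hC₂disj z (hmP z hz) (Finset.mem_union_right _ hzZ)
        have hmQZ : ∀ z ∈ lQ, z ∉ Z := fun z hz hzZ =>
          hC₂disj z (hmQ z hz) (Finset.mem_union_right _ hzZ)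
        have hmPXS : ∀ z ∈ lP, z ∉ X \ S := fun z hz hzX =>
          hC₂disj z (hmP z hz) (Finset.mem_union_left _ hzX)
        have hmQXS : ∀ z ∈ lQ, z ∉ X \ S := fun z hz hzX =>
          hC₂disj z (hmQ z hz) (Finset.mem_union_left _ hzX)
        have hPnoS : ∀ z ∈ lP, z ∉ S := by
          intro z hz hzS
          obtain ⟨l', hl', hm'⟩ := hwP.suffix_from hz
          exact hR1 ⟨z, hzS, l', c₀, hl', hc₀, fun y hy => hmPZ y (hm' y hy)⟩
        have hQnoS : ∀ z ∈ lQ, z ∉ S := by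
          intro z hz hzS
          obtain ⟨l', hl', hm'⟩ := hwQ.suffix_from hz
          obtain ⟨w2, hm2⟩ := hl'.append hwP
          refine hR1 ⟨z, hzS, _, c₀, w2, hc₀, ?_⟩
          intro yy hyy
          rcases hm2 yy hyy with hy | hy
          · exact fun hyZ => hmQZ yy (hm' yy hy) hyZ
          · exact hmPZ yy hy
        have hPavoid : ∀ z ∈ lP, z ∈ Set.univ \ (↑W : Set V) := by
          intro z hz
          refine ⟨trivial, ?_⟩
          intro hzW
          rcases Finset.mem_union.mp hzW with hzX | hzZ
          · by_cases hzS : z ∈ S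
            · exact hPnoS z hz hzS
            · exact hmPXS z hz (Finset.mem_sdiff.mpr ⟨hzX, hzS⟩)
          · exact hmPZ z hz hzZ
        have hQavoid : ∀ z ∈ lQ, z ∈ Set.univ \ (↑W : Set V) := by
          intro z hz
          refine ⟨trivial, ?_⟩
          intro hzW
          rcases Finset.mem_union.mp hzW with hzX | hzZ
          · by_cases hzS : z ∈ S
            · exact hQnoS z hz hzS
            · exact hmQXS z hz (Finset.mem_sdiff.mpr ⟨hzX, hzS⟩)
          · exact hmQZ z hz hzZ
        exact absorb (hBsc W hWcard) hc₀ hc₀ hwP hPavoid hwQ hQavoid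
      obtain ⟨s₀, hs₀⟩ : Sf.Nonempty := Finset.card_pos.mp (by omega)
      have hs₀BX : s₀ ∈ B X := hCX (hSfC s₀ hs₀)
      have hs₀BX' : s₀ ∉ B X' := fun hmem =>
        hBdisj X' hX'lt s₀ hmem (Finset.mem_union_right _ hs₀)
      have hstrict : (B X').ncard < (B X).ncard := by
        have hsub2 : B X' ⊆ (B X) \ {s₀} := by
          intro z hz
          refine ⟨hCX (hBX'sub hz), ?_⟩
          intro hzs
          rw [Set.mem_singleton_iff] at hzs
          rw [hzs] at hz
          exact hs₀BX' hz
        calc (B X').ncard ≤ ((B X) \ {s₀}).ncard :=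
              Set.ncard_le_ncard hsub2 (Set.toFinite _)
          _ < (B X).ncard := Set.ncard_diff_singleton_lt_of_mem hs₀BX (Set.toFinite _)
      have := hXmin X' (Finset.mem_powersetCard_univ.mpr hX'card)
      omega
end

section
/- Let D be a finite digraph which has a faithful representation (D, 𝒱, ℰ, ν, ε) of some graph G, and suppose that G has a haven of order h + 1, where h is a positive even integer. Then D has a haven of order h/2 + 1. -/
/-- A representation of the graph `G` in the digraph on `V` with adjacency `A`:
collections of pairwise vertex-disjoint strongly connected subdigraphs indexed by the
vertices of `G`, and of pairwise vertex-disjoint `2`-eulerianizable subdigraphs indexed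
by the edges of `G`, such that the subdigraph of each edge shares a vertex with the
subdigraph of each of its two ends. -/
structure DigraphRep (V : Type*) [Fintype V] (A : V → V → Prop)
    {W : Type*} (G : SimpleGraph W) where
  vS : W → Set V
  vA : W → V → V → Prop
  eS : Sym2 W → Set V
  eA : Sym2 W → V → V → Prop
  vSub : ∀ w, IsSubdigraph A (vS w) (vA w)
  vNonempty : ∀ w, (vS w).Nonempty
  vStrong : ∀ w, StrongOn (vA w) (vS w)
  vDisj : ∀ w w', w ≠ w' → Disjoint (vS w) (vS w')
  eSub : ∀ e ∈ G.edgeSet, IsSubdigraph A (eS e) (eA e)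
  eNonempty : ∀ e ∈ G.edgeSet, (eS e).Nonempty
  eEul : ∀ e ∈ G.edgeSet, Eulerianizable (eA e) (eS e) 2
  eDisj : ∀ e ∈ G.edgeSet, ∀ e' ∈ G.edgeSet, e ≠ e' → Disjoint (eS e) (eS e')
  meets : ∀ e ∈ G.edgeSet, ∀ w ∈ e, (eS e ∩ vS w).Nonempty

/-- The representation is faithful: the subdigraph of each edge is vertex-disjoint from
the subdigraph of every vertex of `G` that is not an end of that edge. -/
def DigraphRep.Faithful {V W : Type*} [Fintype V] {A : V → V → Prop}
    {G : SimpleGraph W} (R : DigraphRep V A G) : Prop :=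
  ∀ e ∈ G.edgeSet, ∀ w, w ∉ e → Disjoint (R.eS e) (R.vS w)

/-- The graph `G` is connected on the vertex set `S`: any two vertices of `S` are joined
by a walk all of whose vertices lie in `S`. -/
def UConnOn {W : Type*} (G : SimpleGraph W) (S : Set W) : Prop :=
  ∀ u ∈ S, ∀ v ∈ S, ∃ p : G.Walk u v, ∀ x ∈ p.support, x ∈ S

/-- `C` is (the vertex set of) a connected component of the subgraph of `G` induced on `T`. -/
def UIsComponent {W : Type*} (G : SimpleGraph W) (T C : Set W) : Prop :=
  C ⊆ T ∧ C.Nonempty ∧ UConnOn G C ∧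
    ∀ C' : Set W, C ⊆ C' → C' ⊆ T → UConnOn G C' → C' = C

/-- The (undirected) graph `G` has a haven of order `w`. -/
def GHasHaven {W : Type*} (G : SimpleGraph W) (w : ℕ) : Prop :=
  ∃ B : Finset W → Set W, ∀ Z : Finset W, Z.card < w →
    UIsComponent G (↑Z)ᶜ (B Z) ∧ ∀ Z' : Finset W, Z' ⊆ Z → B Z ⊆ B Z'

section ReachHelpers

variable {V : Type*} {A : V → V → Prop} {S T : Set V} {u v w x₀ : V}

/-- Auxiliary: existence of a directed path from `u` to `v` inside `S`. -/
def ReachIn (A : V → V → Prop) (S : Set V) (u v : V) : Prop :=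
  ∃ l : List V, DipathIn A S l ∧ l.head? = some u ∧ l.getLast? = some v

lemma strongOn_iff : StrongOn A S ↔ ∀ u ∈ S, ∀ v ∈ S, ReachIn A S u v := Iff.rfl

lemma reachIn_refl (hu : u ∈ S) : ReachIn A S u u :=
  ⟨[u], ⟨⟨by simp, by simp, List.isChain_singleton u⟩, by simpa using hu⟩, rfl, rfl⟩

lemma reachIn_mono (h : ReachIn A S u v) (hST : S ⊆ T) : ReachIn A T u v := by
  obtain ⟨l, ⟨hp, hmem⟩, h1, h2⟩ := h
  exact ⟨l, ⟨hp, fun x hx => hST (hmem x hx)⟩, h1, h2⟩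

lemma reachIn_of_le {A' : V → V → Prop} {S' : Set V}
    (h : ReachIn A' S' u v) (hA : ∀ a b, A' a b → A a b) (hST : S' ⊆ S) :
    ReachIn A S u v := by
  obtain ⟨l, ⟨⟨hne, hnd, hch⟩, hmem⟩, h1, h2⟩ := h
  exact ⟨l, ⟨⟨hne, hnd, hch.imp hA⟩, fun x hx => hST (hmem x hx)⟩, h1, h2⟩

lemma reachIn_snoc (h : ReachIn A S u v) (hvw : A v w) (hw : w ∈ S) :
    ReachIn A S u w := by
  obtain ⟨l, ⟨⟨hne, hnd, hch⟩, hmem⟩, h1, h2⟩ := h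
  by_cases hwl : w ∈ l
  · obtain ⟨s, t, rfl⟩ := List.append_of_mem hwl
    have hpre : (s ++ [w]) <+: (s ++ w :: t) := ⟨t, by simp⟩
    refine ⟨s ++ [w], ⟨⟨by simp, ?_, hch.prefix hpre⟩,
      fun x hx => hmem x (hpre.subset hx)⟩, ?_, List.getLast?_concat (l := s)⟩
    · exact hnd.sublist (((List.nil_sublist t).cons₂ w).append_left s)
    · rw [← h1, List.head?_append, List.head?_append]
      cases s <;> simp
  · refine ⟨l ++ [w], ⟨⟨by simp, ?_, ?_⟩, ?_⟩, ?_, List.getLast?_concat (l := l)⟩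
    · exact List.nodup_append.2 ⟨hnd, by simp, by intro a ha b hb hab; simp at hb; subst hb; exact hwl (hab ▸ ha)⟩
    · refine List.isChain_append.2 ⟨hch, by simp, ?_⟩
      intro x hx y hy
      rw [h2] at hx
      simp at hx hy
      rw [← hx, ← hy]; exact hvw
    · intro x hx
      rcases List.mem_append.1 hx with hx | hx
      · exact hmem x hx
      · simpa using (by simpa using hx : x = w) ▸ hw
    · rw [List.head?_append, ← h1]
      cases l with
      | nil => simp at h1
      | cons a t => simp

lemma reachIn_of_chain : ∀ (l : List V), l.Chain' A → (∀ x ∈ l, x ∈ S) →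
    ∀ {v w : V}, l.head? = some v → l.getLast? = some w → ReachIn A S u v → ReachIn A S u w := by
  intro l
  induction l with
  | nil => intro _ _ v w h1; simp at h1
  | cons a t ih =>
    intro hch hmem v w h1 h2 huv
    have hva : v = a := by simpa using h1.symm
    subst hva
    cases t with
    | nil =>
      have : w = v := by simpa using h2.symm
      exact this ▸ huv
    | cons b t' =>
      have hab : A v b := (List.isChain_cons_cons.1 hch).1
      have hub : ReachIn A S u b := reachIn_snoc huv hab (hmem b (by simp))
      exact ih (List.isChain_cons_cons.1 hch).2 (fun x hx => hmem x (List.mem_cons_of_mem _ hx))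
        rfl (by simpa using h2) hub

lemma reachIn_trans (h1 : ReachIn A S u v) (h2 : ReachIn A S v w) : ReachIn A S u w := by
  obtain ⟨l, ⟨⟨_, _, hch⟩, hmem⟩, ha, hb⟩ := h2
  exact reachIn_of_chain l hch hmem ha hb h1

lemma strongOn_singleton (hu : u ∈ S) : StrongOn A ({u} : Set V) := by
  intro a ha b hb
  rw [Set.mem_singleton_iff] at ha hb
  subst ha; subst hb
  exact reachIn_refl rfl

lemma strongOn_union (hS : StrongOn A S) (hT : StrongOn A T)
    (hxS : x₀ ∈ S) (hxT : x₀ ∈ T) : StrongOn A (S ∪ T) := by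
  intro a ha b hb
  have h1 : ReachIn A (S ∪ T) a x₀ := by
    rcases ha with ha | ha
    · exact reachIn_mono (hS a ha x₀ hxS) Set.subset_union_left
    · exact reachIn_mono (hT a ha x₀ hxT) Set.subset_union_right
  have h2 : ReachIn A (S ∪ T) x₀ b := by
    rcases hb with hb | hb
    · exact reachIn_mono (hS x₀ hxS b hb) Set.subset_union_left
    · exact reachIn_mono (hT x₀ hxT b hb) Set.subset_union_right
  exact reachIn_trans h1 h2

/-- The strong component of the induced subdigraph on `Wset` containing `x₀`. -/
def ComponentOf (A : V → V → Prop) (Wset : Set V) (x₀ : V) : Set V :=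
  {v | ∃ S : Set V, S ⊆ Wset ∧ StrongOn A S ∧ x₀ ∈ S ∧ v ∈ S}

lemma subset_componentOf (hS : StrongOn A S) (hsub : S ⊆ T) (hx : x₀ ∈ S) :
    S ⊆ ComponentOf A T x₀ := fun v hv => ⟨S, hsub, hS, hx, hv⟩

lemma componentOf_isStrongComponent {Wset : Set V} (hx : x₀ ∈ Wset) :
    IsStrongComponent A Wset (ComponentOf A Wset x₀) := by
  refine ⟨?_, ⟨x₀, ?_⟩, ?_, ?_⟩
  · rintro v ⟨S, hsub, _, _, hv⟩; exact hsub hv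
  · exact ⟨{x₀}, by simpa using hx, strongOn_singleton hx, rfl, rfl⟩
  · rintro a ⟨Sa, hsa, hSa, hxa, haa⟩ b ⟨Sb, hsb, hSb, hxb, hbb⟩
    have hU : StrongOn A (Sa ∪ Sb) := strongOn_union hSa hSb hxa hxb
    have hsubC : Sa ∪ Sb ⊆ ComponentOf A Wset x₀ := by
      refine Set.union_subset ?_ ?_
      · exact subset_componentOf hSa hsa hxa
      · exact subset_componentOf hSb hsb hxb
    exact reachIn_mono (hU a (Or.inl haa) b (Or.inr hbb)) hsubC
  · intro C' hCC' hC'W hC'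
    refine Set.Subset.antisymm ?_ hCC'
    intro v hv
    exact ⟨C', hC'W, hC', hCC' ⟨{x₀}, by simpa using hx, strongOn_singleton hx, rfl, rfl⟩, hv⟩

end ReachHelpers

section RepHelpers

attribute [local instance] Classical.propDecidable

variable {V W : Type} [Fintype V] [Fintype W] [DecidableEq V] [DecidableEq W]
  {A : V → V → Prop} {G : SimpleGraph W}

lemma sym2_exists_mem (e : Sym2 W) : ∃ w, w ∈ e := by
  induction e using Sym2.ind with
  | _ a b => exact ⟨a, Sym2.mem_mk_left a b⟩

lemma sym2_filter_card_le (e : Sym2 W) :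
    (Finset.univ.filter (· ∈ e)).card ≤ 2 := by
  induction e using Sym2.ind with
  | _ a b =>
    have hsub : Finset.univ.filter (· ∈ s(a, b)) ⊆ {a, b} := by
      intro x hx
      simp only [Finset.mem_filter, Sym2.mem_iff] at hx
      simp only [Finset.mem_insert, Finset.mem_singleton]
      tauto
    exact (Finset.card_le_card hsub).trans ((Finset.card_insert_le a {b}).trans (by simp))

/-- The set of vertices of `G` that the vertex `z` of the digraph "touches". -/
noncomputable def touchSet (R : DigraphRep V A G) (z : V) : Finset W :=
  Finset.univ.filter (fun w => z ∈ R.vS w ∨ ∃ e ∈ G.edgeSet, z ∈ R.eS e ∧ w ∈ e)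

lemma card_touchSet_le (R : DigraphRep V A G) (hfaith : R.Faithful) (z : V) :
    (touchSet R z).card ≤ 2 := by
  by_cases hE : ∃ e ∈ G.edgeSet, z ∈ R.eS e
  · obtain ⟨e, he, hz⟩ := hE
    have hsub : touchSet R z ⊆ Finset.univ.filter (· ∈ e) := by
      intro w hw
      simp only [touchSet, Finset.mem_filter, Finset.mem_univ, true_and] at hw ⊢
      rcases hw with hv | ⟨e', he', hz', hwe'⟩
      · by_contra hwe
        exact Set.disjoint_left.1 (hfaith e he w hwe) hz hv
      · rcases eq_or_ne e' e with rfl | hne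
        · exact hwe'
        · exact absurd hz (Set.disjoint_left.1 (R.eDisj e' he' e he hne) hz')
    exact le_trans (Finset.card_le_card hsub) (sym2_filter_card_le e)
  · refine le_trans (Finset.card_le_one.2 ?_) one_le_two
    intro a ha b hb
    simp only [touchSet, Finset.mem_filter, Finset.mem_univ, true_and] at ha hb
    rcases ha with ha | ⟨e, he, hz, _⟩
    · rcases hb with hb | ⟨e, he, hz, _⟩
      · by_contra hne
        exact Set.disjoint_left.1 (R.vDisj a b hne) ha hb
      · exact absurd ⟨e, he, hz⟩ hE
    · exact absurd ⟨e, he, hz⟩ hE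

/-- The set of vertices of `G` touched by the finite set `Z` of digraph vertices. -/
noncomputable def hatZ (R : DigraphRep V A G) (Z : Finset V) : Finset W :=
  Z.biUnion (touchSet R)

lemma card_hatZ_le (R : DigraphRep V A G) (hfaith : R.Faithful) (Z : Finset V) :
    (hatZ R Z).card ≤ 2 * Z.card := by
  refine le_trans Finset.card_biUnion_le ?_
  calc ∑ z ∈ Z, (touchSet R z).card ≤ ∑ _z ∈ Z, 2 :=
        Finset.sum_le_sum fun z _ => card_touchSet_le R hfaith z
    _ = 2 * Z.card := by rw [Finset.sum_const, smul_eq_mul, mul_comm]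

lemma hatZ_mono (R : DigraphRep V A G) {Z' Z : Finset V} (h : Z' ⊆ Z) :
    hatZ R Z' ⊆ hatZ R Z :=
  Finset.biUnion_subset_biUnion_of_subset_left _ h

lemma mem_hatZ_of_vS (R : DigraphRep V A G) {z : V} {w : W} {Z : Finset V}
    (hz : z ∈ Z) (hv : z ∈ R.vS w) : w ∈ hatZ R Z :=
  Finset.mem_biUnion.2 ⟨z, hz, by
    simp only [touchSet, Finset.mem_filter, Finset.mem_univ, true_and]
    exact Or.inl hv⟩

lemma mem_hatZ_of_eS (R : DigraphRep V A G) {z : V} {w : W} {e : Sym2 W} {Z : Finset V}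
    (hz : z ∈ Z) (he : e ∈ G.edgeSet) (hzs : z ∈ R.eS e) (hw : w ∈ e) : w ∈ hatZ R Z :=
  Finset.mem_biUnion.2 ⟨z, hz, by
    simp only [touchSet, Finset.mem_filter, Finset.mem_univ, true_and]
    exact Or.inr ⟨e, he, hzs, hw⟩⟩

/-- The "core" of the haven component: the union of the vertex subdigraphs of vertices
in `b` and the edge subdigraphs of edges with both ends in `b`. -/
def coreSet (R : DigraphRep V A G) (b : Set W) : Set V :=
  (⋃ w ∈ b, R.vS w) ∪ ⋃ e ∈ {e : Sym2 W | e ∈ G.edgeSet ∧ ∀ w ∈ e, w ∈ b}, R.eS e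

lemma coreSet_mono (R : DigraphRep V A G) {b b' : Set W} (h : b ⊆ b') :
    coreSet R b ⊆ coreSet R b' := by
  apply Set.union_subset_union
  · exact Set.iUnion₂_subset fun w hw => Set.subset_iUnion₂_of_subset w (h hw) le_rfl
  · exact Set.iUnion₂_subset fun e he =>
      Set.subset_iUnion₂_of_subset e ⟨he.1, fun w hw => h (he.2 w hw)⟩ le_rfl

lemma vS_subset_coreSet (R : DigraphRep V A G) {b : Set W} {w : W} (hw : w ∈ b) :
    R.vS w ⊆ coreSet R b :=
  fun v hv => Or.inl (Set.mem_iUnion₂.2 ⟨w, hw, hv⟩)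

lemma eS_subset_coreSet (R : DigraphRep V A G) {b : Set W} {e : Sym2 W}
    (he : e ∈ G.edgeSet) (hb : ∀ w ∈ e, w ∈ b) : R.eS e ⊆ coreSet R b :=
  fun v hv => Or.inr (Set.mem_iUnion₂.2 ⟨e, ⟨he, hb⟩, hv⟩)

lemma reach_in_vS (R : DigraphRep V A G) {b : Set W} {w : W} (hw : w ∈ b)
    {x y : V} (hx : x ∈ R.vS w) (hy : y ∈ R.vS w) :
    ReachIn A (coreSet R b) x y :=
  reachIn_of_le (R.vStrong w x hx y hy) (fun a a' ha => (R.vSub w a a' ha).1)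
    (vS_subset_coreSet R hw)

lemma reach_in_eS (R : DigraphRep V A G) {b : Set W} {e : Sym2 W}
    (he : e ∈ G.edgeSet) (hb : ∀ w ∈ e, w ∈ b)
    {x y : V} (hx : x ∈ R.eS e) (hy : y ∈ R.eS e) :
    ReachIn A (coreSet R b) x y :=
  reachIn_of_le ((R.eEul e he).1 x hx y hy) (fun a a' ha => (R.eSub e he a a' ha).1)
    (eS_subset_coreSet R he hb)

lemma reach_along_walk (R : DigraphRep V A G) {b : Set W} {w w' : W}
    (p : G.Walk w w') (hsupp : ∀ x ∈ p.support, x ∈ b) :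
    ∀ x ∈ R.vS w, ∀ y ∈ R.vS w', ReachIn A (coreSet R b) x y := by
  induction p with
  | nil =>
    intro x hx y hy
    exact reach_in_vS R (hsupp _ (by simp)) hx hy
  | @cons w w₁ w'' hadj p ih =>
    intro x hx y hy
    have hwb : w ∈ b := hsupp w (by simp)
    have hw₁b : w₁ ∈ b := hsupp w₁ (by simp [SimpleGraph.Walk.support_cons,
      p.start_mem_support])
    have he : s(w, w₁) ∈ G.edgeSet := G.mem_edgeSet.2 hadj
    have hgood : ∀ u ∈ s(w, w₁), u ∈ b := by
      intro u hu
      rcases Sym2.mem_iff.1 hu with rfl | rfl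
      · exact hwb
      · exact hw₁b
    obtain ⟨q, hqe, hqv⟩ := R.meets _ he w (Sym2.mem_mk_left w w₁)
    obtain ⟨q₁, hq₁e, hq₁v⟩ := R.meets _ he w₁ (Sym2.mem_mk_right w w₁)
    have h1 : ReachIn A (coreSet R b) x q := reach_in_vS R hwb hx hqv
    have h2 : ReachIn A (coreSet R b) q q₁ := reach_in_eS R he hgood hqe hq₁e
    have h3 : ReachIn A (coreSet R b) q₁ y := by
      refine ih (fun u hu => hsupp u ?_) q₁ hq₁v y hy
      simp [SimpleGraph.Walk.support_cons, hu]
    exact reachIn_trans (reachIn_trans h1 h2) h3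

lemma coreSet_anchor (R : DigraphRep V A G) {b : Set W} {u : V}
    (hu : u ∈ coreSet R b) :
    ∃ w ∈ b, ∃ q ∈ R.vS w,
      ReachIn A (coreSet R b) u q ∧ ReachIn A (coreSet R b) q u := by
  rcases hu with hu | hu
  · obtain ⟨w, hw, huw⟩ := Set.mem_iUnion₂.1 hu
    exact ⟨w, hw, u, huw, reachIn_refl (vS_subset_coreSet R hw huw),
      reachIn_refl (vS_subset_coreSet R hw huw)⟩
  · obtain ⟨e, ⟨he, hgood⟩, hue⟩ := Set.mem_iUnion₂.1 hu
    obtain ⟨w, hwe⟩ := sym2_exists_mem e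
    obtain ⟨q, hqe, hqv⟩ := R.meets e he w hwe
    exact ⟨w, hgood w hwe, q, hqv, reach_in_eS R he hgood hue hqe,
      reach_in_eS R he hgood hqe hue⟩

lemma coreSet_strongOn (R : DigraphRep V A G) {b : Set W} (hconn : UConnOn G b) :
    StrongOn A (coreSet R b) := by
  intro u hu v hv
  obtain ⟨w, hwb, q, hqv, huq, _⟩ := coreSet_anchor R hu
  obtain ⟨w', hw'b, q', hq'v, _, hq'v'⟩ := coreSet_anchor R hv
  obtain ⟨p, hp⟩ := hconn w hwb w' hw'b
  exact reachIn_trans (reachIn_trans huq (reach_along_walk R p hp q hqv q' hq'v)) hq'v'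

lemma coreSet_nonempty (R : DigraphRep V A G) {b : Set W} (hb : b.Nonempty) :
    (coreSet R b).Nonempty := by
  obtain ⟨w, hw⟩ := hb
  obtain ⟨x, hx⟩ := R.vNonempty w
  exact ⟨x, vS_subset_coreSet R hw hx⟩

lemma coreSet_disjoint (R : DigraphRep V A G) {Z : Finset V} {b : Set W}
    (hb : b ⊆ (↑(hatZ R Z) : Set W)ᶜ) :
    coreSet R b ⊆ Set.univ \ ↑Z := by
  intro v hv
  refine ⟨trivial, fun hvZ => ?_⟩
  rcases hv with hv | hv
  · obtain ⟨w, hwb, hvw⟩ := Set.mem_iUnion₂.1 hv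
    exact hb hwb (by simpa using mem_hatZ_of_vS R hvZ hvw)
  · obtain ⟨e, ⟨he, hgood⟩, hve⟩ := Set.mem_iUnion₂.1 hv
    obtain ⟨w, hwe⟩ := sym2_exists_mem e
    exact hb (hgood w hwe) (by simpa using mem_hatZ_of_eS R hvZ he hve hwe)

end RepHelpers

/-- If a finite digraph has a faithful representation of a graph `G`, and `G`
has a haven of order `h + 1` for a positive even integer `h`, then the digraph has a haven of
order `h / 2 + 1`. -/
theorem faithful_representation_haven {V W : Type} [Fintype V] [Fintype W]
    [DecidableEq V] [DecidableEq W] (A : V → V → Prop) (G : SimpleGraph W)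
    (h : ℕ) (hpos : 0 < h) (heven : Even h)
    (R : DigraphRep V A G) (hfaith : R.Faithful) (hG : GHasHaven G (h + 1)) :
    HasHaven A (h / 2 + 1) := by
  classical
  obtain ⟨β, hβ⟩ := hG
  -- key cardinality facts
  have h2 : 2 * (h / 2) = h := Nat.mul_div_cancel' (even_iff_two_dvd.mp heven)
  have hhat : ∀ Z : Finset V, Z.card < h / 2 + 1 → (hatZ R Z).card < h + 1 := by
    intro Z hZ
    have : (hatZ R Z).card ≤ 2 * Z.card := card_hatZ_le R hfaith Z
    have h3 : 2 * Z.card ≤ h := by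
      calc 2 * Z.card ≤ 2 * (h / 2) := by omega
        _ = h := h2
    omega
  -- the haven
  refine ⟨fun Z =>
    if hn : (coreSet R (β (hatZ R Z))).Nonempty then
      ComponentOf A (Set.univ \ ↑Z) hn.choose else ∅, ?_⟩
  intro Z _ hZcard
  -- facts about `β (hatZ R Z)`
  obtain ⟨hbsub, hbne, hbconn, _⟩ := (hβ (hatZ R Z) (hhat Z hZcard)).1
  have hcore_ne : (coreSet R (β (hatZ R Z))).Nonempty := coreSet_nonempty R hbne
  have hcore_sub : coreSet R (β (hatZ R Z)) ⊆ Set.univ \ ↑Z := coreSet_disjoint R hbsub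
  have hcore_str : StrongOn A (coreSet R (β (hatZ R Z))) := coreSet_strongOn R hbconn
  have hx₀ : hcore_ne.choose ∈ coreSet R (β (hatZ R Z)) := hcore_ne.choose_spec
  simp only [dif_pos hcore_ne]
  constructor
  · exact componentOf_isStrongComponent (hcore_sub hx₀)
  · intro Z' hZ'Z
    have hZ'card : Z'.card < h / 2 + 1 := lt_of_le_of_lt (Finset.card_le_card hZ'Z) hZcard
    obtain ⟨hbsub', hbne', hbconn', hbmax'⟩ := (hβ (hatZ R Z') (hhat Z' hZ'card)).1
    have hcore_ne' : (coreSet R (β (hatZ R Z'))).Nonempty := coreSet_nonempty R hbne'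
    simp only [dif_pos hcore_ne, dif_pos hcore_ne']
    have hcore_sub' : coreSet R (β (hatZ R Z')) ⊆ Set.univ \ ↑Z' := coreSet_disjoint R hbsub'
    have hcore_str' : StrongOn A (coreSet R (β (hatZ R Z'))) := coreSet_strongOn R hbconn'
    have hx₀' : hcore_ne'.choose ∈ coreSet R (β (hatZ R Z')) := hcore_ne'.choose_spec
    -- β is monotone, so the cores are nested
    have hβmono : β (hatZ R Z) ⊆ β (hatZ R Z') :=
      (hβ (hatZ R Z) (hhat Z hZcard)).2 (hatZ R Z') (hatZ_mono R hZ'Z)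
    have hcoremono : coreSet R (β (hatZ R Z)) ⊆ coreSet R (β (hatZ R Z')) :=
      coreSet_mono R hβmono
    -- components
    obtain ⟨hC_sub, _, hC_str, _⟩ := componentOf_isStrongComponent
      (A := A) (x₀ := hcore_ne.choose) (hcore_sub hx₀)
    obtain ⟨hC'_sub, _, hC'_str, hC'_max⟩ := componentOf_isStrongComponent
      (A := A) (x₀ := hcore_ne'.choose) (hcore_sub' hx₀')
    set C := ComponentOf A (Set.univ \ ↑Z) hcore_ne.choose with hC
    set C' := ComponentOf A (Set.univ \ ↑Z') hcore_ne'.choose with hC'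
    have hxC : hcore_ne.choose ∈ C :=
      subset_componentOf hcore_str hcore_sub hx₀ hx₀
    have hxC' : hcore_ne.choose ∈ C' :=
      subset_componentOf hcore_str' hcore_sub' hx₀' (hcoremono hx₀)
    have hdiff : (Set.univ \ (↑Z : Set V)) ⊆ Set.univ \ ↑Z' :=
      Set.diff_subset_diff_right (by exact_mod_cast Finset.coe_subset.2 hZ'Z)
    have hU : StrongOn A (C ∪ C') := strongOn_union hC_str hC'_str hxC hxC'
    have hUsub : C ∪ C' ⊆ Set.univ \ ↑Z' :=
      Set.union_subset (hC_sub.trans hdiff) hC'_sub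
    have := hC'_max (C ∪ C') Set.subset_union_right hUsub hU
    calc C ⊆ C ∪ C' := Set.subset_union_left
      _ = C' := this
end

section
/- Let n and b be non-negative integers. There exists a positive integer N = N(n, b) such that the following holds: if each edge of the complete graph K_N is labeled with a subset of the vertex set of size at most b, such that no edge receives a label set containing one of its end-vertices, then there is a set S of n vertices such that no edge with both ends in S has any vertex of S in its label set. -/
open Finset

lemma choose_id3 (M m : ℕ) :
    (m+1) * (m+2) * (m+3) * Nat.choose (M+3) (m+3) =
    (M+1) * (M+2) * (M+3) * Nat.choose M m := by
  have h1 := Nat.add_one_mul_choose_eq (M+2) (m+2)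
  have h2 := Nat.add_one_mul_choose_eq (M+1) (m+1)
  have h3 := Nat.add_one_mul_choose_eq M m
  calc (m+1) * (m+2) * (m+3) * Nat.choose (M+3) (m+3)
      = (m+1) * (m+2) * (Nat.choose (M+2+1) (m+2+1) * (m+2+1)) := by ring
    _ = (m+1) * (m+2) * ((M+2+1) * Nat.choose (M+2) (m+2)) := by rw [← h1]
    _ = (M+3) * ((m+1) * (Nat.choose (M+1+1) (m+1+1) * (m+1+1))) := by ring
    _ = (M+3) * ((m+1) * ((M+1+1) * Nat.choose (M+1) (m+1))) := by rw [← h2]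
    _ = (M+3) * ((M+2) * (Nat.choose (M+1) (m+1) * (m+1))) := by ring
    _ = (M+3) * ((M+2) * ((M+1) * Nat.choose M m)) := by rw [← h3]
    _ = (M+1) * (M+2) * (M+3) * Nat.choose M m := by ring

lemma count_supersets {N m : ℕ} (T : Finset (Fin N)) (hT : T.card = 3) :
    ((powersetCard (m+3) (univ : Finset (Fin N))).filter (fun S => T ⊆ S)).card
      = Nat.choose (N - 3) m := by
  have hcard : ((univ : Finset (Fin N)) \ T).card = N - 3 := by
    rw [card_sdiff_of_subset (subset_univ T), card_univ, Fintype.card_fin, hT]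
  rw [← hcard, ← Finset.card_powersetCard]
  apply Finset.card_bij' (fun S _ => S \ T) (fun A _ => A ∪ T)
  · intro S hS
    simp only [mem_filter, mem_powersetCard] at hS
    obtain ⟨⟨_, hScard⟩, hTS⟩ := hS
    rw [mem_powersetCard]
    constructor
    · exact sdiff_subset_sdiff (subset_univ S) (subset_refl T)
    · rw [card_sdiff_of_subset hTS, hScard, hT]
      omega
  · intro A hA
    rw [mem_powersetCard] at hA
    obtain ⟨hAsub, hAcard⟩ := hA
    have hdisj : Disjoint A T := Finset.disjoint_of_subset_left hAsub sdiff_disjoint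
    simp only [mem_filter, mem_powersetCard]
    refine ⟨⟨subset_univ _, ?_⟩, subset_union_right⟩
    rw [card_union_of_disjoint hdisj, hAcard, hT]
  · intro S hS
    simp only [mem_filter] at hS
    exact sdiff_union_of_subset hS.2
  · intro A hA
    rw [mem_powersetCard] at hA
    have hdisj : Disjoint A T := Finset.disjoint_of_subset_left hA.1 sdiff_disjoint
    rw [union_sdiff_right, sdiff_eq_self_of_disjoint hdisj]

lemma aux_small (n b N : ℕ) (hn : n ≤ 2) (hnN : n ≤ N)
    (L : Sym2 (Fin N) → Finset (Fin N))
    (hL : ∀ e : Sym2 (Fin N), ¬ e.IsDiag → (L e).card ≤ b ∧ ∀ u ∈ e, u ∉ L e) :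
    ∃ S : Finset (Fin N), S.card = n ∧
      ∀ u ∈ S, ∀ v ∈ S, u ≠ v → ∀ x ∈ L s(u, v), x ∉ S := by
  obtain ⟨S, -, hScard⟩ := Finset.exists_subset_card_eq
    (show n ≤ (univ : Finset (Fin N)).card by rw [card_univ, Fintype.card_fin]; omega)
  refine ⟨S, hScard, ?_⟩
  intro u hu v hv huv x hx hxS
  have hnd : ¬ (s(u, v) : Sym2 (Fin N)).IsDiag := by
    simpa [Sym2.mk_isDiag_iff] using huv
  obtain ⟨-, hends⟩ := hL _ hnd
  have hxu : x ≠ u := by rintro rfl; exact hends x (by simp [Sym2.mem_iff]) hx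
  have hxv : x ≠ v := by rintro rfl; exact hends x (by simp [Sym2.mem_iff]) hx
  have hsub : ({u, v, x} : Finset (Fin N)) ⊆ S := by
    intro y hy; simp only [mem_insert, mem_singleton] at hy
    rcases hy with rfl | rfl | rfl <;> assumption
  have h3 : ({u, v, x} : Finset (Fin N)).card = 3 := by
    rw [card_insert_of_notMem (by simp [huv, hxu.symm]),
      card_insert_of_notMem (by simp [hxv.symm]), card_singleton]
  have := Finset.card_le_card hsub
  omega

lemma aux_main (m b M : ℕ) (hM : b * (m+3)^3 + m ≤ M)
    (L : Sym2 (Fin (M+3)) → Finset (Fin (M+3)))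
    (hL : ∀ e : Sym2 (Fin (M+3)), ¬ e.IsDiag → (L e).card ≤ b ∧ ∀ u ∈ e, u ∉ L e) :
    ∃ S : Finset (Fin (M+3)), S.card = m + 3 ∧
      ∀ u ∈ S, ∀ v ∈ S, u ≠ v → ∀ x ∈ L s(u, v), x ∉ S := by
  classical
  have hLab : ∀ u v x : Fin (M+3), u ≠ v → x ∈ L s(u, v) → x ≠ u ∧ x ≠ v := by
    intro u v x huv hx
    have hnd : ¬ (s(u, v) : Sym2 (Fin (M+3))).IsDiag := by
      simpa [Sym2.mk_isDiag_iff] using huv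
    obtain ⟨-, hends⟩ := hL _ hnd
    exact ⟨by rintro rfl; exact hends x (by simp [Sym2.mem_iff]) hx,
      by rintro rfl; exact hends x (by simp [Sym2.mem_iff]) hx⟩
  set Bad : Finset (Fin (M+3) × Fin (M+3) × Fin (M+3)) :=
    univ.filter (fun t => t.1 ≠ t.2.1 ∧ t.2.2 ∈ L s(t.1, t.2.1)) with hBadDef
  set P : Finset (Finset (Fin (M+3))) := powersetCard (m+3) univ with hPdef
  set f : Finset (Fin (M+3)) → ℕ :=
    fun S => (Bad.filter (fun t => ({t.1, t.2.1, t.2.2} : Finset (Fin (M+3))) ⊆ S)).card with hfdef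
  -- bound the number of bad triples
  have hBadcard : Bad.card ≤ (M+3) * (M+3) * b := by
    have hsub : Bad ⊆ ((univ ×ˢ univ : Finset (Fin (M+3) × Fin (M+3))).filter
        (fun p => p.1 ≠ p.2)).biUnion
        (fun p => (L s(p.1, p.2)).image (fun x => (p.1, p.2, x))) := by
      intro t ht
      simp only [hBadDef, mem_filter, mem_univ, true_and] at ht
      rw [mem_biUnion]
      exact ⟨(t.1, t.2.1), by simp [ht.1], by
        rw [mem_image]; exact ⟨t.2.2, ht.2, rfl⟩⟩
    calc Bad.card ≤ _ := Finset.card_le_card hsub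
      _ ≤ ∑ p ∈ ((univ ×ˢ univ : Finset (Fin (M+3) × Fin (M+3))).filter (fun p => p.1 ≠ p.2)),
            ((L s(p.1, p.2)).image (fun x => (p.1, p.2, x))).card := Finset.card_biUnion_le
      _ ≤ ∑ _p ∈ ((univ ×ˢ univ : Finset (Fin (M+3) × Fin (M+3))).filter (fun p => p.1 ≠ p.2)), b := by
          apply Finset.sum_le_sum
          intro p hp
          simp only [mem_filter] at hp
          calc ((L s(p.1, p.2)).image _).card ≤ (L s(p.1, p.2)).card := card_image_le
            _ ≤ b := (hL _ (by simpa [Sym2.mk_isDiag_iff] using hp.2)).1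
      _ = (((univ ×ˢ univ : Finset (Fin (M+3) × Fin (M+3))).filter (fun p => p.1 ≠ p.2)).card) * b := by
          rw [Finset.sum_const, smul_eq_mul]
      _ ≤ (M+3) * (M+3) * b := by
          apply Nat.mul_le_mul_right
          calc _ ≤ (univ ×ˢ univ : Finset (Fin (M+3) × Fin (M+3))).card := card_filter_le _ _
            _ = (M+3) * (M+3) := by simp [Finset.card_univ, Fintype.card_fin]
  -- double counting
  have hswap : ∑ S ∈ P, f S = ∑ t ∈ Bad,
      (P.filter (fun S => ({t.1, t.2.1, t.2.2} : Finset (Fin (M+3))) ⊆ S)).card := by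
    simp only [hfdef, Finset.card_filter]
    rw [Finset.sum_comm]
  have hcount : ∀ t ∈ Bad,
      (P.filter (fun S => ({t.1, t.2.1, t.2.2} : Finset (Fin (M+3))) ⊆ S)).card = Nat.choose M m := by
    intro t ht
    simp only [hBadDef, mem_filter, mem_univ, true_and] at ht
    obtain ⟨hxu, hxv⟩ := hLab _ _ _ ht.1 ht.2
    have h3 : ({t.1, t.2.1, t.2.2} : Finset (Fin (M+3))).card = 3 := by
      rw [card_insert_of_notMem (by simp [ht.1, hxu.symm]),
        card_insert_of_notMem (by simp [hxv.symm]), card_singleton]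
    have := count_supersets (m := m) ({t.1, t.2.1, t.2.2} : Finset (Fin (M+3))) h3
    simpa using this
  have hsum : ∑ S ∈ P, f S = Bad.card * Nat.choose M m := by
    rw [hswap, Finset.sum_congr rfl hcount, Finset.sum_const, smul_eq_mul]
  -- the key inequality
  have hKb : (m+1) * (m+2) * (m+3) * b ≤ M := by
    have h1 : (m+1) * (m+2) * (m+3) ≤ (m+3)^3 := by nlinarith
    calc (m+1) * (m+2) * (m+3) * b ≤ (m+3)^3 * b := Nat.mul_le_mul_right b h1
      _ = b * (m+3)^3 := Nat.mul_comm _ _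
      _ ≤ M := le_trans (Nat.le_add_right _ m) hM
  have hstep : (m+1) * (m+2) * (m+3) * (M+3) * b < (M+1) * (M+2) := by
    have h2 : (m+1) * (m+2) * (m+3) * b * (M+3) ≤ M * (M+3) :=
      Nat.mul_le_mul_right (M+3) hKb
    nlinarith [h2]
  have hchpos : 0 < Nat.choose M m :=
    Nat.choose_pos (le_trans (Nat.le_add_left m _) hM)
  have key : (m+1)*(m+2)*(m+3) * ((M+3)*(M+3)*b*Nat.choose M m)
      < (m+1)*(m+2)*(m+3) * (Nat.choose (M+3) (m+3)) := by
    calc (m+1)*(m+2)*(m+3) * ((M+3)*(M+3)*b*Nat.choose M m)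
        = ((m+1)*(m+2)*(m+3)*(M+3)*b) * ((M+3)*Nat.choose M m) := by ring
      _ < ((M+1)*(M+2)) * ((M+3)*Nat.choose M m) := by
          apply Nat.mul_lt_mul_of_lt_of_le hstep (le_refl _)
          positivity
      _ = (M+1)*(M+2)*(M+3)*Nat.choose M m := by ring
      _ = (m+1)*(m+2)*(m+3) * Nat.choose (M+3) (m+3) := by rw [choose_id3]
  have hlt0 : (M+3)*(M+3)*b*Nat.choose M m < Nat.choose (M+3) (m+3) :=
    lt_of_mul_lt_mul_left key (Nat.zero_le _)
  have hPcard : P.card = Nat.choose (M+3) (m+3) := by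
    rw [hPdef, card_powersetCard, card_univ, Fintype.card_fin]
  -- conclude: some S has no bad triple
  have hex : ∃ S ∈ P, f S = 0 := by
    by_contra hcon
    push_neg at hcon
    have h1 : P.card • 1 ≤ ∑ S ∈ P, f S :=
      Finset.card_nsmul_le_sum P f 1 (fun S hS => Nat.one_le_iff_ne_zero.mpr (hcon S hS))
    rw [smul_eq_mul, mul_one] at h1
    have h2 : ∑ S ∈ P, f S ≤ (M+3)*(M+3)*b*Nat.choose M m := by
      rw [hsum]; exact Nat.mul_le_mul_right _ hBadcard
    omega
  obtain ⟨S, hSP, hS0⟩ := hex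
  rw [hPdef, mem_powersetCard] at hSP
  refine ⟨S, hSP.2, ?_⟩
  intro u hu v hv huv x hx hxS
  have hmem : (u, v, x) ∈ Bad.filter
      (fun t => ({t.1, t.2.1, t.2.2} : Finset (Fin (M+3))) ⊆ S) := by
    rw [mem_filter]
    refine ⟨by simp only [hBadDef, mem_filter, mem_univ, true_and]; exact ⟨huv, hx⟩, ?_⟩
    intro y hy
    simp only [mem_insert, mem_singleton] at hy
    rcases hy with rfl | rfl | rfl <;> assumption
  have := Finset.card_eq_zero.mp hS0
  rw [this] at hmem
  exact absurd hmem (Finset.notMem_empty _)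

/-- For all `n, b` there is `N ≥ 1` such that: whenever each edge of `K_N`
is labeled with a set of at most `b` vertices not containing either of its ends, there is a
set `S` of `n` vertices such that no edge with both ends in `S` has a label in `S`. -/
theorem labeled_clique_ramsey (n b : ℕ) :
    ∃ N : ℕ, 0 < N ∧
      ∀ L : Sym2 (Fin N) → Finset (Fin N),
        (∀ e : Sym2 (Fin N), ¬ e.IsDiag → (L e).card ≤ b ∧ ∀ u ∈ e, u ∉ L e) →
        ∃ S : Finset (Fin N), S.card = n ∧
          ∀ u ∈ S, ∀ v ∈ S, u ≠ v → ∀ x ∈ L s(u, v), x ∉ S := by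
  refine ⟨b * n^3 + n + 3, by positivity, ?_⟩
  intro L hL
  rcases le_or_gt n 2 with hn | hn
  · exact aux_small n b _ hn
      (le_trans (Nat.le_add_left n (b * n^3)) (Nat.le_add_right _ 3)) L hL
  · obtain ⟨m, rfl⟩ : ∃ m, n = m + 3 := ⟨n - 3, by omega⟩
    exact aux_main m b (b * (m+3)^3 + (m+3)) (Nat.add_le_add_left (by omega) _) L hL
end

section
/- Let m₁, m₂ and n be positive integers. There exists a positive integer N = N(m₁, m₂, n) such that the following holds: if each edge of the complete graph K_N is labeled with a subset of the vertex set, such that no edge receives a label set containing one of its end-vertices, then one of the following occurs: (1) there is a set S of n vertices such that no edge with both ends in S has any vertex of S in its label set; or (2) there are m₁ edges and m₂ vertices such that each of these m₂ vertices appears in the label set of each of these m₁ edges. -/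
open Finset

namespace LCR

lemma count_supersets {α : Type*} [Fintype α] [DecidableEq α] (A : Finset α) (s : ℕ) :
    ((univ.powersetCard s).filter (fun S => A ⊆ S)).card
      ≤ (Fintype.card α - A.card).choose (s - A.card) := by
  classical
  have := Finset.card_le_card_of_injOn (f := fun S => S \ A)
    (s := (univ.powersetCard s).filter (fun S => A ⊆ S))
    (t := (Aᶜ).powersetCard (s - A.card)) ?_ ?_
  · simpa [Finset.card_powersetCard, Finset.card_compl] using this
  · intro S hS
    simp only [mem_coe, mem_filter, Finset.mem_powersetCard] at hS
    obtain ⟨⟨-, hcard⟩, hAS⟩ := hS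
    rw [mem_coe, Finset.mem_powersetCard]
    constructor
    · intro x hx
      simp only [Finset.mem_sdiff] at hx
      simp [hx.2]
    · rw [Finset.card_sdiff_of_subset hAS, hcard]
  · intro S hS T hT h
    simp only [coe_filter, Set.mem_setOf_eq, Finset.mem_powersetCard] at hS hT
    have : S \ A ∪ A = T \ A ∪ A := by simp only at h; rw [h]
    rwa [Finset.sdiff_union_of_subset hS.2, Finset.sdiff_union_of_subset hT.2] at this

lemma dF_choose (N s : ℕ) : ∀ j, j ≤ s → s ≤ N →
    N.descFactorial j * (N - j).choose (s - j) = s.descFactorial j * N.choose s := by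
  intro j
  induction j with
  | zero => simp
  | succ j ih =>
    intro hj hsN
    have hj' : j ≤ s := Nat.le_of_succ_le hj
    have key : (N - j) * (N - (j+1)).choose (s - (j+1)) = (N - j).choose (s - j) * (s - j) := by
      have h1 : N - (j+1) + 1 = N - j := by omega
      have h2 : s - (j+1) + 1 = s - j := by omega
      have := Nat.add_one_mul_choose_eq (N - (j+1)) (s - (j+1))
      rw [h1, h2] at this
      exact this
    rw [Nat.descFactorial_succ, Nat.descFactorial_succ]
    calc (N - j) * N.descFactorial j * (N - (j+1)).choose (s - (j+1))
        = N.descFactorial j * ((N - j) * (N - (j+1)).choose (s - (j+1))) := by ring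
      _ = N.descFactorial j * ((N - j).choose (s - j) * (s - j)) := by rw [key]
      _ = (s - j) * (N.descFactorial j * (N - j).choose (s - j)) := by ring
      _ = (s - j) * (s.descFactorial j * N.choose s) := by rw [ih hj' hsN]
      _ = (s - j) * s.descFactorial j * N.choose s := by ring

lemma choose_ratio (m a n : ℕ) (hma : m ≤ a) (han : a ≤ n) :
    n.choose m * (a - m)^m ≤ a.choose m * n^m := by
  have h1 : (a - m)^m ≤ a.descFactorial m := by
    calc (a - m)^m ≤ (a + 1 - m)^m := Nat.pow_le_pow_left (by omega) m
      _ ≤ a.descFactorial m := Nat.pow_sub_le_descFactorial a m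
  have h2 : n.descFactorial m ≤ n ^ m := Nat.descFactorial_le_pow n m
  have key : m.factorial * (n.choose m * (a - m)^m) ≤ m.factorial * (a.choose m * n^m) := by
    calc m.factorial * (n.choose m * (a - m)^m)
        = n.descFactorial m * (a - m)^m := by
          rw [Nat.descFactorial_eq_factorial_mul_choose]; ring
      _ ≤ n ^ m * a.descFactorial m := Nat.mul_le_mul h2 h1
      _ = m.factorial * (a.choose m * n^m) := by
          rw [Nat.descFactorial_eq_factorial_mul_choose]; ring
  exact Nat.le_of_mul_le_mul_left key (Nat.factorial_pos m)

set_option maxHeartbeats 2000000 in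
lemma key (m₁ m₂ n' W N : ℕ) (hm₁ : 0 < m₁) (hm₂ : 0 < m₂) (hn' : 4 ≤ n')
    (hW : m₁ * (64 * (2*n')^2)^m₂ + 2*m₂ + 2 ≤ W)
    (hN : N = 32 * (2*n')^2 * W) :
    ∀ L : Sym2 (Fin N) → Finset (Fin N),
      (∀ e : Sym2 (Fin N), ¬ e.IsDiag → ∀ u ∈ e, u ∉ L e) →
      (∃ S : Finset (Fin N), S.card = n' ∧
        ∀ u ∈ S, ∀ v ∈ S, u ≠ v → ∀ x ∈ L s(u, v), x ∉ S) ∨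
      (∃ (Es : Finset (Sym2 (Fin N))) (Vs : Finset (Fin N)),
        Es.card = m₁ ∧ Vs.card = m₂ ∧ (∀ e ∈ Es, ¬ e.IsDiag) ∧
        ∀ e ∈ Es, ∀ x ∈ Vs, x ∈ L e) := by
  classical
  intro L hL
  by_cases h2 : ∃ (Es : Finset (Sym2 (Fin N))) (Vs : Finset (Fin N)),
      Es.card = m₁ ∧ Vs.card = m₂ ∧ (∀ e ∈ Es, ¬ e.IsDiag) ∧
      ∀ e ∈ Es, ∀ x ∈ Vs, x ∈ L e
  · exact Or.inr h2
  left
  -- basic numerology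
  set s : ℕ := 2 * n' with hs
  have hs8 : 8 ≤ s := by omega
  have hWm : 2*m₂ + 2 ≤ W := le_trans (Nat.le_add_left _ _) hW
  have hW1 : 1 ≤ W := by omega
  have hs64 : 64 ≤ s^2 := by nlinarith
  have hsN : s ≤ N := by nlinarith
  have hN0 : 0 < N := by omega
  -- the sets of light triples and heavy pairs
  set P2 : Finset (Fin N × Fin N) := univ.filter (fun p => p.1 < p.2) with hP2
  set TL : Finset ((_ : Fin N × Fin N) × Fin N) :=
    (P2.filter (fun p => (L s(p.1, p.2)).card ≤ W)).sigma (fun p => L s(p.1, p.2)) with hTL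
  set TH : Finset (Fin N × Fin N) := P2.filter (fun p => W < (L s(p.1, p.2)).card) with hTH
  set D0 : ℕ := m₁ * (64 * s^2)^m₂ with hD0
  -- from the failure of outcome (2): every m₂-set is a common label of < m₁ edges
  have hmemP2 : ∀ p : Fin N × Fin N, p ∈ P2 → p.1 < p.2 := by
    intro p hp; rw [hP2] at hp; exact (mem_filter.1 hp).2
  have hcount : ∀ Vs : Finset (Fin N), Vs.card = m₂ →
      (P2.filter (fun p => Vs ⊆ L s(p.1, p.2))).card < m₁ := by
    intro Vs hVs
    by_contra hge
    push_neg at hge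
    obtain ⟨F, hF, hFcard⟩ := Finset.exists_subset_card_eq hge
    apply h2
    refine ⟨F.image (fun p => s(p.1, p.2)), Vs, ?_, hVs, ?_, ?_⟩
    · rw [Finset.card_image_of_injOn, hFcard]
      intro p hp q hq hpq
      have hp' : p.1 < p.2 := hmemP2 p (Finset.mem_of_mem_filter _ (hF hp))
      have hq' : q.1 < q.2 := hmemP2 q (Finset.mem_of_mem_filter _ (hF hq))
      simp only [Sym2.eq_iff] at hpq
      rcases hpq with ⟨h1, h2⟩ | ⟨h1, h2⟩
      · exact Prod.ext h1 h2
      · exfalso; rw [h1, h2] at hp'; exact absurd (hp'.trans hq') (lt_irrefl _)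
    · intro e he
      obtain ⟨p, hp, rfl⟩ := Finset.mem_image.1 he
      have hp' : p.1 < p.2 := hmemP2 p (Finset.mem_of_mem_filter _ (hF hp))
      rw [Sym2.mk_isDiag_iff]
      exact Fin.ne_of_lt hp'
    · intro e he x hx
      obtain ⟨p, hp, rfl⟩ := Finset.mem_image.1 he
      have := (mem_filter.1 (hF hp)).2
      exact this hx
  -- heavy pairs are few
  have hTHcard : TH.card ≤ D0 := by
    have hstep1 : TH.card * (W+1).choose m₂
        ≤ ∑ p ∈ TH, ((univ.powersetCard m₂).filter (fun Vs => Vs ⊆ L s(p.1, p.2))).card := by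
      calc TH.card * (W+1).choose m₂ = ∑ _p ∈ TH, (W+1).choose m₂ := by
            rw [Finset.sum_const, smul_eq_mul]
        _ ≤ _ := by
            apply Finset.sum_le_sum
            intro p hp
            have hheavy : W < (L s(p.1, p.2)).card := by
              rw [hTH] at hp; exact (mem_filter.1 hp).2
            have heq : ((univ.powersetCard m₂).filter (fun Vs => Vs ⊆ L s(p.1, p.2)))
                = (L s(p.1, p.2)).powersetCard m₂ := by
              ext Vs
              simp only [Finset.mem_filter, Finset.mem_powersetCard, Finset.subset_univ,
                true_and]
              tauto
            rw [heq, Finset.card_powersetCard]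
            exact Nat.choose_le_choose m₂ hheavy
    have hswap : ∑ p ∈ TH, ((univ.powersetCard m₂).filter (fun Vs => Vs ⊆ L s(p.1, p.2))).card
        = ∑ Vs ∈ univ.powersetCard m₂, (TH.filter (fun p => Vs ⊆ L s(p.1, p.2))).card := by
      simp only [Finset.card_filter]
      exact Finset.sum_comm
    have hbound : ∑ Vs ∈ univ.powersetCard m₂, (TH.filter (fun p => Vs ⊆ L s(p.1, p.2))).card
        ≤ N.choose m₂ * (m₁ - 1) := by
      calc ∑ Vs ∈ univ.powersetCard m₂, (TH.filter (fun p => Vs ⊆ L s(p.1, p.2))).card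
          ≤ ∑ _Vs ∈ univ.powersetCard m₂, (m₁ - 1) := by
            apply Finset.sum_le_sum
            intro Vs hVs
            have h1 : (P2.filter (fun p => Vs ⊆ L s(p.1, p.2))).card < m₁ :=
              hcount Vs (Finset.mem_powersetCard.1 hVs).2
            have h2' : TH.filter (fun p => Vs ⊆ L s(p.1, p.2))
                ⊆ P2.filter (fun p => Vs ⊆ L s(p.1, p.2)) := by
              apply Finset.filter_subset_filter
              rw [hTH]; exact Finset.filter_subset _ _
            have := Finset.card_le_card h2'
            omega
        _ = N.choose m₂ * (m₁ - 1) := by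
            rw [Finset.sum_const, smul_eq_mul, Finset.card_powersetCard, Finset.card_univ,
              Fintype.card_fin]
    have hkey1 : TH.card * (W+1).choose m₂ ≤ N.choose m₂ * (m₁ - 1) := by
      rw [hswap] at hstep1; exact hstep1.trans hbound
    have hWN : W + 1 ≤ N := by nlinarith
    have hratio := choose_ratio m₂ (W+1) N (by omega) hWN
    have hNle : N ≤ 64 * s^2 * (W + 1 - m₂) := by
      have h1 : W ≤ 2 * (W + 1 - m₂) := by omega
      calc N = 32 * s^2 * W := hN
        _ ≤ 32 * s^2 * (2 * (W + 1 - m₂)) := Nat.mul_le_mul_left _ h1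
        _ = 64 * s^2 * (W + 1 - m₂) := by ring
    have hc : 0 < (W+1).choose m₂ * (W + 1 - m₂)^m₂ := by
      apply Nat.mul_pos (Nat.choose_pos (by omega))
      exact Nat.pow_pos (by omega)
    have hchain : TH.card * ((W+1).choose m₂ * (W + 1 - m₂)^m₂)
        ≤ D0 * ((W+1).choose m₂ * (W + 1 - m₂)^m₂) := by
      calc TH.card * ((W+1).choose m₂ * (W + 1 - m₂)^m₂)
          = (TH.card * (W+1).choose m₂) * (W + 1 - m₂)^m₂ := by ring
        _ ≤ (N.choose m₂ * (m₁ - 1)) * (W + 1 - m₂)^m₂ := Nat.mul_le_mul_right _ hkey1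
        _ = (m₁ - 1) * (N.choose m₂ * (W + 1 - m₂)^m₂) := by ring
        _ ≤ (m₁ - 1) * ((W+1).choose m₂ * N^m₂) := Nat.mul_le_mul_left _ hratio
        _ ≤ (m₁ - 1) * ((W+1).choose m₂ * (64 * s^2 * (W + 1 - m₂))^m₂) := by
            apply Nat.mul_le_mul_left
            apply Nat.mul_le_mul_left
            exact Nat.pow_le_pow_left hNle m₂
        _ = ((m₁ - 1) * (64 * s^2)^m₂) * ((W+1).choose m₂ * (W + 1 - m₂)^m₂) := by
            rw [mul_pow]; ring
        _ ≤ D0 * ((W+1).choose m₂ * (W + 1 - m₂)^m₂) := by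
            apply Nat.mul_le_mul_right
            rw [hD0]
            exact Nat.mul_le_mul_right _ (by omega)
    exact Nat.le_of_mul_le_mul_right (by simpa [mul_assoc] using hchain) hc
  -- light triples are not too many
  have hTLcard : TL.card ≤ W * N^2 := by
    rw [hTL, Finset.card_sigma]
    calc ∑ p ∈ P2.filter (fun p => (L s(p.1, p.2)).card ≤ W), (L s(p.1, p.2)).card
        ≤ ∑ _p ∈ P2.filter (fun p => (L s(p.1, p.2)).card ≤ W), W := by
          apply Finset.sum_le_sum
          intro p hp
          exact (mem_filter.1 hp).2
      _ = (P2.filter (fun p => (L s(p.1, p.2)).card ≤ W)).card * W := by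
          rw [Finset.sum_const, smul_eq_mul]
      _ ≤ N^2 * W := by
          apply Nat.mul_le_mul_right
          calc (P2.filter (fun p => (L s(p.1, p.2)).card ≤ W)).card
              ≤ P2.card := Finset.card_filter_le _ _
            _ ≤ (univ : Finset (Fin N × Fin N)).card := by
                rw [hP2]; exact Finset.card_filter_le _ _
            _ = N^2 := by
                rw [Finset.card_univ, Fintype.card_prod, Fintype.card_fin]; ring
      _ = W * N^2 := by ring
  -- the counting function
  set f : Finset (Fin N) → ℕ := fun S =>
    (∑ q ∈ TL, if q.1.1 ∈ S ∧ q.1.2 ∈ S ∧ q.2 ∈ S then 1 else 0) +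
    (∑ p ∈ TH, if p.1 ∈ S ∧ p.2 ∈ S then 1 else 0) with hf
  set PP : Finset (Finset (Fin N)) := univ.powersetCard s with hPP
  have havg : ∑ S ∈ PP, f S ≤ n' * N.choose s := by
    have hsum : ∑ S ∈ PP, f S
        = (∑ q ∈ TL, (PP.filter (fun S => q.1.1 ∈ S ∧ q.1.2 ∈ S ∧ q.2 ∈ S)).card)
        + (∑ p ∈ TH, (PP.filter (fun S => p.1 ∈ S ∧ p.2 ∈ S)).card) := by
      simp only [hf]
      rw [Finset.sum_add_distrib]
      congr 1
      · rw [Finset.sum_comm]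
        refine Finset.sum_congr rfl fun q _ => ?_
        rw [Finset.card_filter]
      · rw [Finset.sum_comm]
        refine Finset.sum_congr rfl fun p _ => ?_
        rw [Finset.card_filter]
    have hqbound : ∀ q ∈ TL, (PP.filter (fun S => q.1.1 ∈ S ∧ q.1.2 ∈ S ∧ q.2 ∈ S)).card
        ≤ (N - 3).choose (s - 3) := by
      intro q hq
      rw [hTL, Finset.mem_sigma] at hq
      obtain ⟨hq1, hq2⟩ := hq
      have hlt : q.1.1 < q.1.2 := hmemP2 _ (Finset.mem_of_mem_filter _ hq1)
      have hnd : ¬ (s(q.1.1, q.1.2) : Sym2 (Fin N)).IsDiag := by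
        rw [Sym2.mk_isDiag_iff]; exact Fin.ne_of_lt hlt
      have hne1 : q.2 ≠ q.1.1 := fun h => hL _ hnd q.1.1 (Sym2.mem_mk_left _ _) (h ▸ hq2)
      have hne2 : q.2 ≠ q.1.2 := fun h => hL _ hnd q.1.2 (Sym2.mem_mk_right _ _) (h ▸ hq2)
      have hAcard : ({q.1.1, q.1.2, q.2} : Finset (Fin N)).card = 3 := by
        rw [Finset.card_insert_of_notMem (by simp [Fin.ne_of_lt hlt, Ne.symm hne1]),
          Finset.card_insert_of_notMem (by simp [Ne.symm hne2]), Finset.card_singleton]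
      have heqf : (PP.filter (fun S => q.1.1 ∈ S ∧ q.1.2 ∈ S ∧ q.2 ∈ S))
          = PP.filter (fun S => ({q.1.1, q.1.2, q.2} : Finset (Fin N)) ⊆ S) := by
        apply Finset.filter_congr
        intro S _
        simp [Finset.insert_subset_iff]
      rw [heqf, hPP]
      have hcs := count_supersets ({q.1.1, q.1.2, q.2} : Finset (Fin N)) s
      rw [hAcard, Fintype.card_fin] at hcs
      exact hcs
    have hpbound : ∀ p ∈ TH, (PP.filter (fun S => p.1 ∈ S ∧ p.2 ∈ S)).card
        ≤ (N - 2).choose (s - 2) := by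
      intro p hp
      have hlt : p.1 < p.2 := hmemP2 _ (by rw [hTH] at hp; exact Finset.mem_of_mem_filter _ hp)
      have hAcard : ({p.1, p.2} : Finset (Fin N)).card = 2 := by
        rw [Finset.card_insert_of_notMem (by simp [Fin.ne_of_lt hlt]), Finset.card_singleton]
      have heqf : (PP.filter (fun S => p.1 ∈ S ∧ p.2 ∈ S))
          = PP.filter (fun S => ({p.1, p.2} : Finset (Fin N)) ⊆ S) := by
        apply Finset.filter_congr
        intro S _
        simp [Finset.insert_subset_iff]
      rw [heqf, hPP]
      have hcs := count_supersets ({p.1, p.2} : Finset (Fin N)) s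
      rw [hAcard, Fintype.card_fin] at hcs
      exact hcs
    obtain ⟨u, hu⟩ : ∃ u, s^2 * W = u := ⟨_, rfl⟩
    have hu64 : 64 ≤ u := by nlinarith
    have hNu : N = 32 * u := by rw [hN, ← hu]; ring
    have ha31 : 31 * u ≤ N - 1 := by omega
    have hb30 : 30 * u ≤ N - 2 := by omega
    have hA : W * N^2 * ((N-3).choose (s-3)) ≤ (n' - 1) * N.choose s := by
      have hid := dF_choose N s 3 (by omega) hsN
      have hdFN : N.descFactorial 3 = (N-2) * ((N-1) * N) := by
        simp [Nat.descFactorial_succ, Nat.descFactorial_zero]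
      have hdFs : s.descFactorial 3 = (s-2) * ((s-1) * s) := by
        simp [Nat.descFactorial_succ, Nat.descFactorial_zero]
      have hs2 : s - 2 = 2 * (n' - 1) := by omega
      have core : W * N^2 * s.descFactorial 3 ≤ N.descFactorial 3 * (n' - 1) := by
        rw [hdFN, hdFs]
        have h930 : (30*u) * ((31*u) * N) ≤ (N-2) * ((N-1) * N) :=
          Nat.mul_le_mul hb30 (Nat.mul_le_mul ha31 (le_refl N))
        calc W * N^2 * ((s-2) * ((s-1) * s))
            = (n' - 1) * (2 * W * N^2 * ((s-1) * s)) := by rw [hs2]; ring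
          _ ≤ (n' - 1) * (2 * W * N^2 * (s * s)) := by
              gcongr
              exact Nat.sub_le s 1
          _ = (n' - 1) * (2 * u * N^2) := by rw [← hu]; ring
          _ ≤ (n' - 1) * ((30*u) * ((31*u) * N)) := by
              gcongr (n' - 1) * ?_
              rw [hNu]; nlinarith
          _ ≤ (n' - 1) * ((N-2) * ((N-1) * N)) := Nat.mul_le_mul_left _ h930
          _ = (N-2) * ((N-1) * N) * (n' - 1) := by ring
      have hdF3pos : 0 < N.descFactorial 3 := by
        rw [hdFN]
        exact Nat.mul_pos (by omega) (Nat.mul_pos (by omega) (by omega))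
      have hchain : N.descFactorial 3 * (W * N^2 * ((N-3).choose (s-3)))
          ≤ N.descFactorial 3 * ((n' - 1) * N.choose s) := by
        calc N.descFactorial 3 * (W * N^2 * ((N-3).choose (s-3)))
            = (W * N^2) * (N.descFactorial 3 * (N-3).choose (s-3)) := by ring
          _ = (W * N^2) * (s.descFactorial 3 * N.choose s) := by rw [hid]
          _ = (W * N^2 * s.descFactorial 3) * N.choose s := by ring
          _ ≤ (N.descFactorial 3 * (n' - 1)) * N.choose s := Nat.mul_le_mul_right _ core
          _ = N.descFactorial 3 * ((n' - 1) * N.choose s) := by ring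
      exact Nat.le_of_mul_le_mul_left hchain hdF3pos
    have hB : D0 * ((N-2).choose (s-2)) ≤ 1 * N.choose s := by
      have hid := dF_choose N s 2 (by omega) hsN
      have hdFN : N.descFactorial 2 = (N-1) * N := by
        simp [Nat.descFactorial_succ, Nat.descFactorial_zero]
      have hdFs : s.descFactorial 2 = (s-1) * s := by
        simp [Nat.descFactorial_succ, Nat.descFactorial_zero]
      have hD0W : D0 ≤ W := by omega
      have core : D0 * s.descFactorial 2 ≤ N.descFactorial 2 * 1 := by
        rw [hdFN, hdFs]
        calc D0 * ((s-1) * s) ≤ W * (s * s) :=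
              Nat.mul_le_mul hD0W (Nat.mul_le_mul_right _ (Nat.sub_le s 1))
          _ = u := by rw [← hu]; ring
          _ ≤ 1 * N := by rw [hNu]; omega
          _ ≤ (N-1) * N := Nat.mul_le_mul_right _ (by omega)
          _ = (N-1) * N * 1 := by ring
      have hdF2pos : 0 < N.descFactorial 2 := by
        rw [hdFN]; exact Nat.mul_pos (by omega) (by omega)
      have hchain : N.descFactorial 2 * (D0 * ((N-2).choose (s-2)))
          ≤ N.descFactorial 2 * (1 * N.choose s) := by
        calc N.descFactorial 2 * (D0 * ((N-2).choose (s-2)))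
            = D0 * (N.descFactorial 2 * (N-2).choose (s-2)) := by ring
          _ = D0 * (s.descFactorial 2 * N.choose s) := by rw [hid]
          _ = (D0 * s.descFactorial 2) * N.choose s := by ring
          _ ≤ (N.descFactorial 2 * 1) * N.choose s := Nat.mul_le_mul_right _ core
          _ = N.descFactorial 2 * (1 * N.choose s) := by ring
      exact Nat.le_of_mul_le_mul_left hchain hdF2pos
    calc ∑ S ∈ PP, f S
        = (∑ q ∈ TL, (PP.filter (fun S => q.1.1 ∈ S ∧ q.1.2 ∈ S ∧ q.2 ∈ S)).card)
          + (∑ p ∈ TH, (PP.filter (fun S => p.1 ∈ S ∧ p.2 ∈ S)).card) := hsum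
      _ ≤ TL.card * ((N-3).choose (s-3)) + TH.card * ((N-2).choose (s-2)) := by
          apply add_le_add
          · have := Finset.sum_le_card_nsmul TL _ _ hqbound
            rwa [smul_eq_mul] at this
          · have := Finset.sum_le_card_nsmul TH _ _ hpbound
            rwa [smul_eq_mul] at this
      _ ≤ (W * N^2) * ((N-3).choose (s-3)) + D0 * ((N-2).choose (s-2)) :=
          add_le_add (Nat.mul_le_mul_right _ hTLcard) (Nat.mul_le_mul_right _ hTHcard)
      _ ≤ (n' - 1) * N.choose s + 1 * N.choose s := add_le_add hA hB
      _ = n' * N.choose s := by rw [← add_mul]; congr 1; omega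
  have hex : ∃ S ∈ PP, f S ≤ n' := by
    have hPPcard : PP.card = N.choose s := by
      rw [hPP, Finset.card_powersetCard, Finset.card_univ, Fintype.card_fin]
    have hCpos : 0 < N.choose s := Nat.choose_pos hsN
    by_contra hno
    push_neg at hno
    have hge := Finset.card_nsmul_le_sum PP f (n' + 1) (fun S hS => hno S hS)
    rw [smul_eq_mul, hPPcard] at hge
    have hcontr : N.choose s * (n' + 1) ≤ n' * N.choose s := le_trans hge havg
    nlinarith [hcontr, hCpos]
  obtain ⟨S, hSPP, hfS⟩ := hex
  have hScard : S.card = s := (Finset.mem_powersetCard.1 hSPP).2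
  -- bad pairs inside S
  set Bad : Finset (Fin N × Fin N) :=
    P2.filter (fun p => p.1 ∈ S ∧ p.2 ∈ S ∧ ((L s(p.1, p.2)) ∩ S).Nonempty) with hBadDef
  have hBad : Bad.card ≤ n' := by
    have hsplit : Bad.card ≤ (Bad.filter (fun p => W < (L s(p.1, p.2)).card)).card
        + (Bad.filter (fun p => ¬ W < (L s(p.1, p.2)).card)).card := by
      refine le_trans (Finset.card_le_card ?_) (Finset.card_union_le _ _)
      intro p hp
      by_cases hc : W < (L s(p.1, p.2)).card
      · exact Finset.mem_union_left _ (Finset.mem_filter.2 ⟨hp, hc⟩)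
      · exact Finset.mem_union_right _ (Finset.mem_filter.2 ⟨hp, hc⟩)
    have hBH : (Bad.filter (fun p => W < (L s(p.1, p.2)).card)).card
        ≤ ∑ p ∈ TH, (if p.1 ∈ S ∧ p.2 ∈ S then 1 else 0) := by
      rw [show (∑ p ∈ TH, if p.1 ∈ S ∧ p.2 ∈ S then 1 else 0)
          = (TH.filter (fun p => p.1 ∈ S ∧ p.2 ∈ S)).card from (Finset.card_filter _ _).symm]
      apply Finset.card_le_card
      intro p hp
      rw [Finset.mem_filter] at hp ⊢
      obtain ⟨hpBad, hheavy⟩ := hp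
      rw [hBadDef, Finset.mem_filter] at hpBad
      exact ⟨by rw [hTH]; exact Finset.mem_filter.2 ⟨hpBad.1, hheavy⟩, hpBad.2.1, hpBad.2.2.1⟩
    have hBL : (Bad.filter (fun p => ¬ W < (L s(p.1, p.2)).card)).card
        ≤ ∑ q ∈ TL, (if q.1.1 ∈ S ∧ q.1.2 ∈ S ∧ q.2 ∈ S then 1 else 0) := by
      rw [show (∑ q ∈ TL, if q.1.1 ∈ S ∧ q.1.2 ∈ S ∧ q.2 ∈ S then 1 else 0)
          = (TL.filter (fun q => q.1.1 ∈ S ∧ q.1.2 ∈ S ∧ q.2 ∈ S)).card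
          from (Finset.card_filter _ _).symm]
      set g : Fin N × Fin N → Fin N := fun p =>
        if h : ((L s(p.1, p.2)) ∩ S).Nonempty then ((L s(p.1, p.2)) ∩ S).min' h
        else ⟨0, hN0⟩ with hg
      apply Finset.card_le_card_of_injOn (fun p => (⟨p, g p⟩ : (_ : Fin N × Fin N) × Fin N))
      · intro p hp
        rw [Finset.mem_coe, Finset.mem_filter] at hp
        obtain ⟨hpBad, hlight⟩ := hp
        rw [hBadDef, Finset.mem_filter] at hpBad
        obtain ⟨hpP2, h1, h2', hne⟩ := hpBad
        have hgp : g p ∈ (L s(p.1, p.2)) ∩ S := by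
          rw [hg]; simp only; rw [dif_pos hne]; exact Finset.min'_mem _ hne
        rw [Finset.mem_coe, Finset.mem_filter]
        constructor
        · rw [hTL, Finset.mem_sigma]
          exact ⟨Finset.mem_filter.2 ⟨hpP2, Nat.le_of_not_lt hlight⟩, (Finset.mem_inter.1 hgp).1⟩
        · exact ⟨h1, h2', (Finset.mem_inter.1 hgp).2⟩
      · intro p _ q _ h
        simpa using congrArg Sigma.fst h
    have hfS2 : (∑ p ∈ TH, if p.1 ∈ S ∧ p.2 ∈ S then 1 else 0)
        + (∑ q ∈ TL, if q.1.1 ∈ S ∧ q.1.2 ∈ S ∧ q.2 ∈ S then 1 else 0) ≤ n' := by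
      rw [add_comm]; exact hfS
    exact le_trans (le_trans hsplit (add_le_add hBH hBL)) hfS2
  -- remove one end of each bad pair
  set S' : Finset (Fin N) := S \ Bad.image Prod.fst with hS'
  have hS'card : n' ≤ S'.card := by
    have himg : (Bad.image Prod.fst).card ≤ n' :=
      le_trans (Finset.card_image_le) hBad
    have hle := Finset.le_card_sdiff (Bad.image Prod.fst) S
    rw [← hS'] at hle
    omega
  obtain ⟨S'', hS''sub, hS''card⟩ := Finset.exists_subset_card_eq hS'card
  refine ⟨S'', hS''card, ?_⟩
  intro u hu v hv huv x hx hxS''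
  have hxS' : x ∈ S' := hS''sub hxS''
  have main : ∀ a b : Fin N, a < b → a ∈ S' → b ∈ S' → x ∈ L s(a, b) → False := by
    intro a b hab ha hb hxL
    rw [hS', Finset.mem_sdiff] at ha hb hxS'
    have hpBad : (a, b) ∈ Bad := by
      rw [hBadDef, Finset.mem_filter]
      exact ⟨by rw [hP2]; exact Finset.mem_filter.2 ⟨Finset.mem_univ _, hab⟩,
        ha.1, hb.1, ⟨x, Finset.mem_inter.2 ⟨hxL, hxS'.1⟩⟩⟩
    exact ha.2 (Finset.mem_image_of_mem Prod.fst hpBad)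
  rcases lt_or_gt_of_ne huv with h | h
  · exact main u v h (hS''sub hu) (hS''sub hv) hx
  · have hx' : x ∈ L s(v, u) := by rwa [Sym2.eq_swap]
    exact main v u h (hS''sub hv) (hS''sub hu) hx'

end LCR

open LCR in
/-- For all positive `m₁, m₂, n` there is `N ≥ 1` such that: whenever each
edge of `K_N` is labeled with a set of vertices not containing either of its ends, either
there is a set `S` of `n` vertices such that no edge with both ends in `S` has a label in
`S`, or there are `m₁` edges and `m₂` vertices such that each of the vertices appears in the
label set of each of the edges. -/
theorem labeled_clique_ramsey_general (m₁ m₂ n : ℕ)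
    (hm₁ : 0 < m₁) (hm₂ : 0 < m₂) (hn : 0 < n) :
    ∃ N : ℕ, 0 < N ∧
      ∀ L : Sym2 (Fin N) → Finset (Fin N),
        (∀ e : Sym2 (Fin N), ¬ e.IsDiag → ∀ u ∈ e, u ∉ L e) →
        (∃ S : Finset (Fin N), S.card = n ∧
          ∀ u ∈ S, ∀ v ∈ S, u ≠ v → ∀ x ∈ L s(u, v), x ∉ S) ∨
        (∃ (Es : Finset (Sym2 (Fin N))) (Vs : Finset (Fin N)),
          Es.card = m₁ ∧ Vs.card = m₂ ∧ (∀ e ∈ Es, ¬ e.IsDiag) ∧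
          ∀ e ∈ Es, ∀ x ∈ Vs, x ∈ L e) := by
  classical
  refine ⟨32 * (2*(n+3))^2 * (m₁ * (64 * (2*(n+3))^2)^m₂ + 2*m₂ + 2), by positivity, ?_⟩
  intro L hL
  rcases LCR.key m₁ m₂ (n+3) (m₁ * (64 * (2*(n+3))^2)^m₂ + 2*m₂ + 2) _ hm₁ hm₂ (by omega)
      (le_refl _) rfl L hL with ⟨S, hScard, hSclean⟩ | h2
  · obtain ⟨T, hTsub, hTcard⟩ := Finset.exists_subset_card_eq (show n ≤ S.card by omega)
    refine Or.inl ⟨T, hTcard, ?_⟩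
    intro u hu v hv huv x hx hxT
    exact hSclean u (hTsub hu) v (hTsub hv) huv x hx (hTsub hxT)
  · exact Or.inr h2
end
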